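/- arXiv:1501.04673 — 3 statements merged into one kernel-verified Lean document; each statement's English description precedes it below -/
import Mathlib

section
/- Let Ω_s ⊂ ℂ² (s ∈ [0,1]) be a family of strictly pseudoconvex domains with defining functions ρ_s, where the family s ↦ ρ_s is continuous in s. Let φ_s : Δ → ℂ² be a continuous family of nonconstant holomorphic maps, each extending continuously to Δ̄, and set D_s := φ_s(Δ). Suppose the boundary curves satisfy φ_s(∂Δ) ⊂ ∂Ω_s for every s ∈ [0,1], and D_s ⊂ Ω_s for every s ∈ [0,1). Then D₁ ⊂ Ω₁. -/
open Set Metric Complex Filter Topology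

noncomputable section

/-- Multiplication by `i` on `ℂ²`. -/
def iSmul (v : ℂ × ℂ) : ℂ × ℂ := (Complex.I * v.1, Complex.I * v.2)

/-- The Euclidean (real) inner product on `ℂ² ≅ ℝ⁴`. -/
def rInner (u v : ℂ × ℂ) : ℝ :=
  (u.1 * (starRingEnd ℂ) v.1 + u.2 * (starRingEnd ℂ) v.2).re

/-- The Euclidean norm on `ℂ² ≅ ℝ⁴`. -/
def rNorm (u : ℂ × ℂ) : ℝ := Real.sqrt (rInner u u)

/-- The Laplacian of a function `f : ℂ → ℝ` at `w`. -/
def lap (f : ℂ → ℝ) (w : ℂ) : ℝ :=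
  iteratedFDeriv ℝ 2 f w ![1, 1] + iteratedFDeriv ℝ 2 f w ![Complex.I, Complex.I]

/-- Restriction of `u : ℂ² → ℝ` to the complex line through `z` in direction `v`. -/
def lineRestr (u : ℂ × ℂ → ℝ) (z v : ℂ × ℂ) : ℂ → ℝ :=
  fun t => u (z + (t * v.1, t * v.2))

/-- `u` is smooth and strictly plurisubharmonic on `U`: its restriction to every complex
line is strictly subharmonic (positive Laplacian). -/
def StrictPSHOn (u : ℂ × ℂ → ℝ) (U : Set (ℂ × ℂ)) : Prop :=
  ContDiffOn ℝ (⊤ : ℕ∞) u U ∧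
    ∀ z ∈ U, ∀ v : ℂ × ℂ, v ≠ 0 → 0 < lap (lineRestr u z v) 0

/-- `Ω` is a bounded strictly pseudoconvex domain with defining function `ρ`: `ρ` is
smooth and strictly plurisubharmonic on a neighborhood `U` of `closure Ω` and
`Ω = {z ∈ U | ρ z < 0}`. -/
def IsStrictPseudoconvexWith (Ω : Set (ℂ × ℂ)) (ρ : ℂ × ℂ → ℝ) : Prop :=
  IsOpen Ω ∧ Ω.Nonempty ∧ Bornology.IsBounded Ω ∧
    ∃ U : Set (ℂ × ℂ), IsOpen U ∧ closure Ω ⊆ U ∧ StrictPSHOn ρ U ∧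
      Ω = {z ∈ U | ρ z < 0}

namespace DiskTrap


/-- 1-d second derivative test at a local max. -/
lemma second_deriv_nonpos {g : ℝ → ℝ} {c : ℝ}
    (hdiff : ∀ᶠ t in nhds (0:ℝ), DifferentiableAt ℝ g t)
    (hder : HasDerivAt (deriv g) c 0)
    (hmax : IsLocalMax g 0) : c ≤ 0 := by
  by_contra hc
  push_neg at hc
  have h0 : deriv g 0 = 0 := hmax.deriv_eq_zero
  have hslope : Tendsto (slope (deriv g) 0) (𝓝[≠] (0:ℝ)) (𝓝 c) :=
    hasDerivAt_iff_tendsto_slope.1 hder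
  have hpos : ∀ᶠ t in 𝓝[≠] (0:ℝ), 0 < slope (deriv g) 0 t :=
    hslope.eventually (eventually_gt_nhds hc)
  have hall : ∀ᶠ t in 𝓝[≠] (0:ℝ),
      0 < slope (deriv g) 0 t ∧ (DifferentiableAt ℝ g t ∧ g t ≤ g 0) :=
    hpos.and ((hdiff.and hmax).filter_mono nhdsWithin_le_nhds)
  rw [eventually_nhdsWithin_iff] at hall
  obtain ⟨δ, hδpos, H⟩ := Metric.eventually_nhds_iff.mp hall
  have hdiff0 : DifferentiableAt ℝ g 0 := hdiff.self_of_nhds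
  have hδ2 : (0:ℝ) < δ/2 := by linarith
  have key : ∀ t : ℝ, 0 < t → t ≤ δ/2 →
      (0 < slope (deriv g) 0 t ∧ (DifferentiableAt ℝ g t ∧ g t ≤ g 0)) := by
    intro t ht hle
    refine H ?_ ?_
    · rw [Real.dist_eq, sub_zero, abs_of_pos ht]; linarith
    · simp only [mem_compl_iff, mem_singleton_iff]; exact ht.ne'
  have hmono : StrictMonoOn g (Icc 0 (δ/2)) := by
    apply strictMonoOn_of_deriv_pos (convex_Icc _ _)
    · intro t ht
      rcases eq_or_lt_of_le ht.1 with h | h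
      · exact (h ▸ hdiff0).continuousAt.continuousWithinAt
      · exact ((key t h ht.2).2.1).continuousAt.continuousWithinAt
    · intro t ht
      rw [interior_Icc] at ht
      have hs := (key t ht.1 ht.2.le).1
      rw [slope_def_field, h0, sub_zero, sub_zero] at hs
      have := mul_pos hs ht.1
      rwa [div_mul_cancel₀ _ ht.1.ne'] at this
  obtain ⟨δ₂, hδ₂pos, H₂⟩ := Metric.eventually_nhds_iff.mp hmax
  set t₀ := min (δ/2) (δ₂/2) with ht₀def
  have ht₀pos : 0 < t₀ := lt_min hδ2 (by linarith)
  have h1 : g 0 < g t₀ :=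
    hmono (left_mem_Icc.mpr hδ2.le) ⟨ht₀pos.le, min_le_left _ _⟩ ht₀pos
  have h2 : g t₀ ≤ g 0 := by
    apply H₂
    rw [Real.dist_eq, sub_zero, abs_of_pos ht₀pos]
    calc t₀ ≤ δ₂/2 := min_le_right _ _
      _ < δ₂ := by linarith
  linarith


/-- Second derivative test in direction `a` at a local max of `f + ε * normSq (· - zc)`. -/
lemma d2_slice_le {f : ℂ → ℝ} {O : Set ℂ} (hO : IsOpen O)
    (hf : ContDiffOn ℝ (⊤ : ℕ∞) f O) {w₀ : ℂ} (hw : w₀ ∈ O) (a zc : ℂ) {ε : ℝ}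
    (hmax : IsLocalMax (fun z => f z + ε * normSq (z - zc)) w₀) :
    fderiv ℝ (fderiv ℝ f) w₀ a a + ε * (2 * normSq a) ≤ 0 := by
  set ℓ : ℝ → ℂ := fun t => w₀ + t • a with hℓdef
  have hℓ0 : ℓ 0 = w₀ := by simp [hℓdef]
  have hℓd : ∀ t : ℝ, HasDerivAt ℓ a t := by
    intro t
    simpa [hℓdef] using ((hasDerivAt_id t).smul_const a).const_add w₀
  have hℓc : Continuous ℓ := by
    have : Continuous fun t : ℝ => t • a := by fun_prop
    exact continuous_const.add this
  set S : Set ℝ := ℓ ⁻¹' O with hSdef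
  have hSopen : IsOpen S := hO.preimage hℓc
  have hS0 : (0:ℝ) ∈ S := by
    simp only [hSdef, mem_preimage, hℓ0]; exact hw
  have hfd : ∀ t ∈ S, DifferentiableAt ℝ f (ℓ t) := fun t ht =>
    (hf.contDiffAt (hO.mem_nhds ht)).differentiableAt (by simp)
  have hcomp : ∀ t ∈ S, HasDerivAt (fun s : ℝ => f (ℓ s)) (fderiv ℝ f (ℓ t) a) t :=
    fun t ht => ((hfd t ht).hasFDerivAt).comp_hasDerivAt t (hℓd t)
  -- second derivative of the `f` part
  have hFd : DifferentiableAt ℝ (fderiv ℝ f) w₀ := by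
    have h1 : ContDiffOn ℝ (⊤ : ℕ∞) (fderiv ℝ f) O := by
      exact hf.fderiv_of_isOpen hO (le_of_eq ENat.coe_top_add_one)
    exact (h1.differentiableOn (by simp)).differentiableAt (hO.mem_nhds hw)
  have hF2 : HasDerivAt (fun t => fderiv ℝ f (ℓ t)) (fderiv ℝ (fderiv ℝ f) w₀ a) 0 := by
    have := (hℓ0 ▸ hFd.hasFDerivAt).comp_hasDerivAt 0 (hℓd 0)
    rw [hℓ0] at this
    exact this
  have hF3 : HasDerivAt (fun t => fderiv ℝ f (ℓ t) a) (fderiv ℝ (fderiv ℝ f) w₀ a a) 0 := by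
    have h := hF2.clm_apply (hasDerivAt_const (0:ℝ) a)
    simpa using h
  -- polynomial part
  set A : ℝ := normSq (w₀ - zc) with hA
  set B : ℝ := 2 * ((w₀ - zc).re * a.re + (w₀ - zc).im * a.im) with hB
  set C : ℝ := normSq a with hC
  have hpoly : ∀ t : ℝ, normSq (ℓ t - zc) = A + B * t + C * t^2 := by
    intro t
    have h1 : ℓ t - zc = (w₀ - zc) + (t:ℂ) * a := by
      simp only [hℓdef, Complex.real_smul]; ring
    rw [h1]
    simp only [hA, hB, hC, normSq_apply, Complex.add_re, Complex.add_im, Complex.mul_re,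
      Complex.mul_im, Complex.ofReal_re, Complex.ofReal_im]
    ring
  have hq : ∀ t : ℝ, HasDerivAt (fun s : ℝ => A + B * s + C * s^2) (B + C * (2 * t)) t := by
    intro t
    have h1 : HasDerivAt (fun s : ℝ => A + B * s) B t := by
      simpa using ((hasDerivAt_id t).const_mul B).const_add A
    have h2 : HasDerivAt (fun s : ℝ => C * s^2) (C * (2 * t)) t := by
      have := (hasDerivAt_pow 2 t).const_mul C
      simpa using this
    exact h1.add h2
  -- the full slice function
  set g : ℝ → ℝ := fun t => f (ℓ t) + ε * (A + B * t + C * t^2) with hgdef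
  have hgeq : ∀ t : ℝ, g t = f (ℓ t) + ε * normSq (ℓ t - zc) := by
    intro t; rw [hpoly t]
  have hg : ∀ t ∈ S, HasDerivAt g (fderiv ℝ f (ℓ t) a + ε * (B + C * (2 * t))) t :=
    fun t ht => (hcomp t ht).add ((hq t).const_mul ε)
  have hgdiff : ∀ᶠ t in 𝓝 (0:ℝ), DifferentiableAt ℝ g t := by
    filter_upwards [hSopen.mem_nhds hS0] with t ht
    exact (hg t ht).differentiableAt
  have hderg : ∀ᶠ t in 𝓝 (0:ℝ), deriv g t = fderiv ℝ f (ℓ t) a + ε * (B + C * (2 * t)) := by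
    filter_upwards [hSopen.mem_nhds hS0] with t ht
    exact (hg t ht).deriv
  have hder2 : HasDerivAt (deriv g)
      (fderiv ℝ (fderiv ℝ f) w₀ a a + ε * (C * 2)) 0 := by
    have hrhs : HasDerivAt (fun t => fderiv ℝ f (ℓ t) a + ε * (B + C * (2 * t)))
        (fderiv ℝ (fderiv ℝ f) w₀ a a + ε * (C * 2)) 0 := by
      refine hF3.add ?_
      have : HasDerivAt (fun t : ℝ => B + C * (2 * t)) (C * 2) 0 := by
        simpa using (((hasDerivAt_id (0:ℝ)).const_mul (2:ℝ)).const_mul C).const_add B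
      exact this.const_mul ε
    exact hrhs.congr_of_eventuallyEq hderg
  have hgmax : IsLocalMax g 0 := by
    have htend : Tendsto ℓ (𝓝 0) (𝓝 w₀) := by
      rw [← hℓ0]; exact hℓc.tendsto 0
    have hev := htend.eventually hmax
    unfold IsLocalMax IsMaxFilter
    filter_upwards [hev] with t ht
    rw [hgeq t, hgeq 0, hℓ0]
    simpa using ht
  have := second_deriv_nonpos hgdiff hder2 hgmax
  calc fderiv ℝ (fderiv ℝ f) w₀ a a + ε * (2 * normSq a)
      = fderiv ℝ (fderiv ℝ f) w₀ a a + ε * (C * 2) := by rw [hC]; ring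
    _ ≤ 0 := this


/-- For a `ℂ`-differentiable map, the real Fréchet derivative in direction `a`. -/
lemma fderiv_real_eq_smul {φ : ℂ → ℂ × ℂ} {w : ℂ} (h : DifferentiableAt ℂ φ w) (a : ℂ) :
    fderiv ℝ φ w a = a • deriv φ w := by
  have h1 : fderiv ℝ φ w = (fderiv ℂ φ w).restrictScalars ℝ :=
    (h.hasFDerivAt.restrictScalars ℝ).fderiv
  have h2 : fderiv ℂ φ w a = a • fderiv ℂ φ w 1 := by
    conv_lhs => rw [show a = a • (1:ℂ) by simp]
    rw [map_smul]
  rw [h1]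
  show fderiv ℂ φ w a = a • deriv φ w
  rw [h2, fderiv_apply_one_eq_deriv]



/-- Second derivative of `ρ ∘ φ` along direction `a`, for `φ` holomorphic. -/
lemma d2_comp {U : Set (ℂ × ℂ)} {ρ : ℂ × ℂ → ℝ} (hU : IsOpen U)
    (hρ : ContDiffOn ℝ (⊤:ℕ∞) ρ U) {φ : ℂ → ℂ × ℂ} {O : Set ℂ} (hO : IsOpen O)
    (hφ : AnalyticOnNhd ℂ φ O) (hmap : MapsTo φ O U) {q : ℂ} (hq : q ∈ O) (a : ℂ) :
    fderiv ℝ (fderiv ℝ (fun w => ρ (φ w))) q a a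
      = fderiv ℝ (fderiv ℝ ρ) (φ q) (a • deriv φ q) (a • deriv φ q)
        + fderiv ℝ ρ (φ q) ((a * a) • deriv (deriv φ) q) := by
  set L : (ℂ × ℂ) →L[ℝ] (ℂ →L[ℝ] (ℂ × ℂ)) :=
    (ContinuousLinearMap.lsmul ℝ ℂ : ℂ →L[ℝ] (ℂ × ℂ) →L[ℝ] (ℂ × ℂ)).flip with hLdef
  have hLa : ∀ (m : ℂ × ℂ) (x : ℂ), L m x = x • m := fun m x => rfl
  have hφd : ∀ w ∈ O, DifferentiableAt ℂ φ w := fun w hw => (hφ w hw).differentiableAt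
  have hρdiff : ∀ x ∈ U, DifferentiableAt ℝ ρ x := fun x hx =>
    (hρ.contDiffAt (hU.mem_nhds hx)).differentiableAt (by simp)
  have hρ'cd : ContDiffOn ℝ (⊤:ℕ∞) (fderiv ℝ ρ) U :=
    hρ.fderiv_of_isOpen hU (le_of_eq ENat.coe_top_add_one)
  have hρ'diff : DifferentiableAt ℝ (fderiv ℝ ρ) (φ q) :=
    (hρ'cd.differentiableOn (by simp)).differentiableAt
      (hU.mem_nhds (hmap hq))
  -- first derivative on O
  have hfd : ∀ w ∈ O, fderiv ℝ (fun w => ρ (φ w)) w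
      = (fderiv ℝ ρ (φ w)).comp (L (deriv φ w)) := by
    intro w hw
    have hcomp : fderiv ℝ (ρ ∘ φ) w = (fderiv ℝ ρ (φ w)).comp (fderiv ℝ φ w) :=
      fderiv_comp w (hρdiff _ (hmap hw)) ((hφd w hw).restrictScalars ℝ)
    rw [show (fun w => ρ (φ w)) = ρ ∘ φ from rfl, hcomp]
    congr 1
    refine ContinuousLinearMap.ext fun x => ?_
    rw [hLa]
    exact fderiv_real_eq_smul (hφd w hw) x
  -- differentiability of the factors at q
  have hφ' : AnalyticOnNhd ℂ (deriv φ) O := hφ.deriv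
  have hd0 : DifferentiableAt ℂ (deriv φ) q := (hφ' q hq).differentiableAt
  -- derivative of c := fderiv ℝ ρ ∘ φ at q
  have hc' : HasFDerivAt (fun w => fderiv ℝ ρ (φ w))
      ((fderiv ℝ (fderiv ℝ ρ) (φ q)).comp (L (deriv φ q))) q := by
    have h := (hρ'diff.hasFDerivAt).comp q
      (((hφd q hq).restrictScalars ℝ).hasFDerivAt)
    have heq : (fderiv ℝ (fderiv ℝ ρ) (φ q)).comp (fderiv ℝ φ q)
        = (fderiv ℝ (fderiv ℝ ρ) (φ q)).comp (L (deriv φ q)) := by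
      congr 1
      refine ContinuousLinearMap.ext fun x => ?_
      rw [hLa]
      exact fderiv_real_eq_smul (hφd q hq) x
    rw [show (fun w => fderiv ℝ ρ (φ w)) = (fderiv ℝ ρ) ∘ φ from rfl]
    exact heq ▸ h
  -- derivative of d := L ∘ deriv φ at q
  have hd' : HasFDerivAt (fun w => L (deriv φ w))
      (L.comp (fderiv ℝ (deriv φ) q)) q := by
    have h := (L.hasFDerivAt (x := deriv φ q)).comp q
      ((hd0.restrictScalars ℝ).hasFDerivAt)
    exact h
  -- second derivative via clm_comp
  have H := hc'.clm_comp hd'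
  have heq2 : fderiv ℝ (fderiv ℝ (fun w => ρ (φ w))) q
      = fderiv ℝ (fun w => (fderiv ℝ ρ (φ w)).comp (L (deriv φ w))) q := by
    apply Filter.EventuallyEq.fderiv_eq
    filter_upwards [hO.mem_nhds hq] with w hw
    exact hfd w hw
  rw [heq2, H.fderiv]
  simp only [ContinuousLinearMap.add_apply, ContinuousLinearMap.coe_comp', Function.comp_apply,
    ContinuousLinearMap.compL_apply, ContinuousLinearMap.flip_apply,
    ContinuousLinearMap.comp_apply]
  simp only [hLa]
  rw [fderiv_real_eq_smul hd0 a, smul_smul, add_comm]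

/-- `lineRestr` rewritten with `•`. -/
lemma lineRestr_eq (ρ : ℂ × ℂ → ℝ) (p v : ℂ × ℂ) :
    lineRestr ρ p v = fun t : ℂ => ρ (p + t • v) := by
  funext t
  have h : (t * v.1, t * v.2) = t • v := by
    ext
    · simp
    · simp
  show ρ (p + (t * v.1, t * v.2)) = ρ (p + t • v)
  rw [h]

lemma d2_lineRestr {U : Set (ℂ × ℂ)} {ρ : ℂ × ℂ → ℝ} (hU : IsOpen U)
    (hρ : ContDiffOn ℝ (⊤:ℕ∞) ρ U) {p : ℂ × ℂ} (hp : p ∈ U) (v : ℂ × ℂ) (a : ℂ) :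
    fderiv ℝ (fderiv ℝ (lineRestr ρ p v)) 0 a a
      = fderiv ℝ (fderiv ℝ ρ) p (a • v) (a • v) := by
  rw [lineRestr_eq]
  set ψ : ℂ → ℂ × ℂ := fun t => p + t • v with hψdef
  have hψdiff : Differentiable ℂ ψ := fun t => (differentiableAt_id.smul_const v).const_add p
  have hψcont : Continuous ψ := hψdiff.continuous
  set O : Set ℂ := ψ ⁻¹' U with hO
  have hOopen : IsOpen O := hU.preimage hψcont
  have h0 : (0:ℂ) ∈ O := by simp [hO, hψdef, hp]
  have hψan : AnalyticOnNhd ℂ ψ O := (hψdiff.differentiableOn).analyticOnNhd hOopen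
  have hder : ∀ t : ℂ, HasDerivAt ψ v t := by
    intro t
    simpa [hψdef] using ((hasDerivAt_id t).smul_const v).const_add p
  have hderfun : deriv ψ = fun _ => v := funext fun t => (hder t).deriv
  have h := d2_comp hU hρ hOopen hψan (fun t ht => ht) h0 a
  rw [h, hderfun]
  have hψ0 : ψ 0 = p := by simp [hψdef]
  rw [hψ0]
  simp

lemma lap_lineRestr {U : Set (ℂ × ℂ)} {ρ : ℂ × ℂ → ℝ} (hU : IsOpen U)
    (hρ : ContDiffOn ℝ (⊤:ℕ∞) ρ U) {p : ℂ × ℂ} (hp : p ∈ U) (v : ℂ × ℂ) :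
    lap (lineRestr ρ p v) 0
      = fderiv ℝ (fderiv ℝ ρ) p v v
        + fderiv ℝ (fderiv ℝ ρ) p (Complex.I • v) (Complex.I • v) := by
  unfold lap
  rw [iteratedFDeriv_two_apply, iteratedFDeriv_two_apply]
  simp only [Matrix.cons_val_zero, Matrix.cons_val_one, Matrix.head_cons]
  rw [d2_lineRestr hU hρ hp v 1, d2_lineRestr hU hρ hp v Complex.I, one_smul]


end DiskTrap

/-- **Disk trapping lemma.** If a continuous family of holomorphic disks `D_s = φ_s(Δ)`
has boundaries in `∂Ω_s` for a continuous family of strictly pseudoconvex domains `Ω_s`,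
and `D_s ⊆ Ω_s` for all `s ∈ [0,1)`, then also `D₁ ⊆ Ω₁`. -/
theorem disk_trapping (Ω : ℝ → Set (ℂ × ℂ)) (ρ : ℝ → ℂ × ℂ → ℝ)
    (hΩ : ∀ s ∈ Icc (0 : ℝ) 1, IsStrictPseudoconvexWith (Ω s) (ρ s))
    (hρcont : ContinuousOn (fun q : ℝ × (ℂ × ℂ) => ρ q.1 q.2) (Icc (0 : ℝ) 1 ×ˢ univ))
    (φ : ℝ → ℂ → ℂ × ℂ)
    (hφcont : ContinuousOn (fun q : ℝ × ℂ => φ q.1 q.2)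
      (Icc (0 : ℝ) 1 ×ˢ closedBall (0 : ℂ) 1))
    (hφhol : ∀ s ∈ Icc (0 : ℝ) 1, DifferentiableOn ℂ (φ s) (ball (0 : ℂ) 1))
    (hφnc : ∀ s ∈ Icc (0 : ℝ) 1, ¬ ∃ v : ℂ × ℂ, ∀ z ∈ ball (0 : ℂ) 1, φ s z = v)
    (hbd : ∀ s ∈ Icc (0 : ℝ) 1, φ s '' sphere (0 : ℂ) 1 ⊆ frontier (Ω s))
    (hin : ∀ s ∈ Ico (0 : ℝ) 1, φ s '' ball (0 : ℂ) 1 ⊆ Ω s) :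
    φ 1 '' ball (0 : ℂ) 1 ⊆ Ω 1 := by
  have h1mem : (1:ℝ) ∈ Icc (0:ℝ) 1 := ⟨zero_le_one, le_rfl⟩
  obtain ⟨hΩopen, hΩne, hΩbd, U, hUopen, hclU, hpsh, hΩeq⟩ := hΩ 1 h1mem
  obtain ⟨hρsm, hρpsh⟩ := hpsh
  set f : ℂ → ℂ × ℂ := φ 1 with hfdef
  have hfc : ContinuousOn f (closedBall (0:ℂ) 1) := by
    have h1 : ContinuousOn (fun z : ℂ => (((1:ℝ), z) : ℝ × ℂ)) (closedBall (0:ℂ) 1) :=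
      (continuous_const.prodMk continuous_id).continuousOn
    exact hφcont.comp h1 (fun z hz => ⟨h1mem, hz⟩)
  have hρ1c : Continuous (ρ 1) := by
    rw [← continuousOn_univ]
    have h1 : ContinuousOn (fun x : ℂ × ℂ => (((1:ℝ), x) : ℝ × (ℂ × ℂ))) univ :=
      (continuous_const.prodMk continuous_id).continuousOn
    exact hρcont.comp h1 (fun x _ => ⟨h1mem, mem_univ x⟩)
  set u : ℂ → ℝ := fun z => ρ 1 (f z) with hudef
  have hucont : ContinuousOn u (closedBall (0:ℂ) 1) := hρ1c.comp_continuousOn hfc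
  have hcl0 : ∀ x ∈ closure (Ω 1), ρ 1 x ≤ 0 := by
    intro x hx
    refine closure_minimal ?_ (isClosed_le hρ1c continuous_const) hx
    intro y hy
    rw [hΩeq] at hy
    exact le_of_lt hy.2
  have hfr0 : ∀ x ∈ frontier (Ω 1), ρ 1 x = 0 := by
    intro x hx
    have hxcl : x ∈ closure (Ω 1) := frontier_subset_closure hx
    refine le_antisymm (hcl0 x hxcl) ?_
    by_contra hlt
    push_neg at hlt
    have hxΩ : x ∈ Ω 1 := by rw [hΩeq]; exact ⟨hclU hxcl, hlt⟩
    rw [hΩopen.frontier_eq] at hx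
    exact hx.2 hxΩ
  have hu0 : ∀ z ∈ closedBall (0:ℂ) 1, u z ≤ 0 := by
    intro z hz
    rcases lt_or_eq_of_le (mem_closedBall.mp hz) with hlt | heq
    · have hzball : z ∈ ball (0:ℂ) 1 := mem_ball.mpr hlt
      set g : ℝ → ℝ := fun s => ρ s (φ s z) with hgdef
      have hgc : ContinuousOn g (Icc 0 1) := by
        have hpath : ContinuousOn (fun s : ℝ => ((s, φ s z) : ℝ × (ℂ × ℂ))) (Icc (0:ℝ) 1) := by
          refine continuousOn_id.prodMk ?_
          have h2 : ContinuousOn (fun s : ℝ => ((s, z) : ℝ × ℂ)) (Icc (0:ℝ) 1) :=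
            (continuous_id.prodMk continuous_const).continuousOn
          exact hφcont.comp h2 (fun s hs => ⟨hs, ball_subset_closedBall hzball⟩)
        exact hρcont.comp hpath (fun s hs => ⟨hs, mem_univ _⟩)
      have hneg : ∀ s ∈ Ico (0:ℝ) 1, g s < 0 := by
        intro s hs
        have hsIcc : s ∈ Icc (0:ℝ) 1 := ⟨hs.1, hs.2.le⟩
        obtain ⟨_, _, _, Us, hUs, _, _, hΩs⟩ := hΩ s hsIcc
        have hmem : φ s z ∈ Ω s := hin s hs (mem_image_of_mem _ hzball)
        rw [hΩs] at hmem
        exact hmem.2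
      have hne : (𝓝[Ico (0:ℝ) 1] (1:ℝ)).NeBot := by
        apply mem_closure_iff_nhdsWithin_neBot.mp
        rw [closure_Ico zero_ne_one]
        exact ⟨zero_le_one, le_rfl⟩
      have htend : Tendsto g (𝓝[Ico (0:ℝ) 1] 1) (𝓝 (g 1)) :=
        (hgc 1 h1mem).mono Ico_subset_Icc_self
      exact le_of_tendsto htend
        (eventually_nhdsWithin_of_forall (fun s hs => (hneg s hs).le))
    · have hzs : z ∈ sphere (0:ℂ) 1 := mem_sphere.mpr heq
      have hfrz := hbd 1 h1mem (mem_image_of_mem _ hzs)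
      exact (hfr0 _ hfrz).le
  -- the open set O where everything is smooth
  have hfball : ContinuousOn f (ball (0:ℂ) 1) := hfc.mono ball_subset_closedBall
  set O : Set ℂ := ball (0:ℂ) 1 ∩ f ⁻¹' U with hOdef
  have hOopen : IsOpen O := hfball.isOpen_inter_preimage isOpen_ball hUopen
  have hφan : AnalyticOnNhd ℂ f (ball (0:ℂ) 1) :=
    (hφhol 1 h1mem).analyticOnNhd isOpen_ball
  have hφanO : AnalyticOnNhd ℂ f O := hφan.mono inter_subset_left
  have hmapO : MapsTo f O U := fun z hz => hz.2
  have hfsm : ContDiffOn ℝ (⊤:ℕ∞) f O :=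
    (hφanO.contDiffOn_of_completeSpace).restrict_scalars ℝ
  have husm : ContDiffOn ℝ (⊤:ℕ∞) u O := hρsm.comp hfsm hmapO
  have localkey : ∀ z₀ ∈ O, ∀ (zc : ℂ) (ε : ℝ),
      IsLocalMax (fun z => u z + ε * normSq (z - zc)) z₀ →
      lap (lineRestr (ρ 1) (f z₀) (deriv f z₀)) 0 + 4 * ε ≤ 0 := by
    intro z₀ hz₀ zc ε hmax
    have h1 := DiskTrap.d2_slice_le hOopen husm hz₀ 1 zc hmax
    have hI := DiskTrap.d2_slice_le hOopen husm hz₀ Complex.I zc hmax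
    have hcomp1 := DiskTrap.d2_comp hUopen hρsm hOopen hφanO hmapO hz₀ 1
    have hcompI := DiskTrap.d2_comp hUopen hρsm hOopen hφanO hmapO hz₀ Complex.I
    have hlap := DiskTrap.lap_lineRestr hUopen hρsm (hmapO hz₀) (deriv f z₀)
    rw [hudef] at h1 hI
    rw [hcomp1] at h1
    rw [hcompI] at hI
    have hSI : fderiv ℝ (ρ 1) (f z₀) ((Complex.I * Complex.I) • deriv (deriv f) z₀)
        = - fderiv ℝ (ρ 1) (f z₀) (((1:ℂ) * 1) • deriv (deriv f) z₀) := by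
      rw [show (Complex.I * Complex.I : ℂ) = -((1:ℂ) * 1) by
        simp [Complex.I_mul_I], neg_smul, map_neg]
    rw [hlap]
    rw [hSI] at hI
    simp only [one_smul, Complex.normSq_one, Complex.normSq_I] at h1 hI ⊢
    linarith
  have hlap_nonneg : ∀ z₀ ∈ O, 0 ≤ lap (lineRestr (ρ 1) (f z₀) (deriv f z₀)) 0 := by
    intro z₀ hz₀
    by_cases hv : deriv f z₀ = 0
    · rw [DiskTrap.lap_lineRestr hUopen hρsm (hmapO hz₀), hv]
      simp
    · exact (hρpsh (f z₀) (hmapO hz₀) _ hv).le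
  have pointwise : ∀ z₀ ∈ O, u z₀ = 0 → deriv f z₀ ≠ 0 → False := by
    intro z₀ hz₀ huz hv
    have hmax : IsLocalMax (fun z => u z + (0:ℝ) * normSq (z - z₀)) z₀ := by
      have hball : ∀ᶠ z in 𝓝 z₀, z ∈ ball (0:ℂ) 1 := isOpen_ball.eventually_mem hz₀.1
      filter_upwards [hball] with z hzb
      simp only [zero_mul, add_zero]
      rw [huz]
      exact hu0 z (ball_subset_closedBall hzb)
    have hk := localkey z₀ hz₀ z₀ 0 hmax
    have h2 := hρpsh (f z₀) (hmapO hz₀) _ hv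
    linarith
  have step3 : ∀ z₀ ∈ O, u z₀ < 0 := by
    intro z₀ hz₀
    rcases lt_or_eq_of_le (hu0 z₀ (ball_subset_closedBall hz₀.1)) with hlt | hzero
    · exact hlt
    exfalso
    by_cases hv : deriv f z₀ = 0
    swap
    · exact pointwise z₀ hz₀ hzero hv
    rcases (hφan.deriv z₀ hz₀.1).eventually_eq_zero_or_eventually_ne_zero with hcase | hcase
    · -- f is constant : contradiction with hφnc
      have hallzero : EqOn (deriv f) 0 (ball (0:ℂ) 1) :=
        (hφan.deriv).eqOn_zero_of_preconnected_of_eventuallyEq_zero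
          (convex_ball (0:ℂ) 1).isPreconnected hz₀.1 hcase
      apply hφnc 1 h1mem
      refine ⟨f 0, fun z hzb => ?_⟩
      refine (convex_ball (0:ℂ) 1).is_const_of_fderivWithin_eq_zero
        (𝕜 := ℂ) (hφhol 1 h1mem) ?_ hzb (mem_ball_self one_pos)
      intro x hx
      rw [fderivWithin_of_isOpen isOpen_ball hx]
      refine ContinuousLinearMap.ext fun y => ?_
      have : fderiv ℂ f x y = y • deriv f x := by
        conv_lhs => rw [show y = y • (1:ℂ) by simp]
        rw [map_smul, fderiv_apply_one_eq_deriv]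
      rw [this, hallzero hx]
      simp
    · -- isolated zero of deriv f : use the ε-perturbation argument
      rw [eventually_nhdsWithin_iff] at hcase
      obtain ⟨δ, hδpos, hδ⟩ := Metric.eventually_nhds_iff.mp hcase
      obtain ⟨r₀, hr₀pos, hr₀⟩ := Metric.isOpen_iff.mp hOopen z₀ hz₀
      set r := min (δ/2) (r₀/2) with hrdef
      have hrpos : 0 < r := lt_min (by linarith) (by linarith)
      have hrδ : r < δ := lt_of_le_of_lt (min_le_left _ _) (by linarith)
      have hrr₀ : r < r₀ := lt_of_le_of_lt (min_le_right _ _) (by linarith)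
      have hcbO : closedBall z₀ r ⊆ O := fun w hw =>
        hr₀ (lt_of_le_of_lt (mem_closedBall.mp hw) hrr₀)
      have hsph : ∀ w ∈ sphere z₀ r, u w < 0 := by
        intro w hw
        have hwO : w ∈ O := hcbO (sphere_subset_closedBall hw)
        rcases lt_or_eq_of_le (hu0 w (ball_subset_closedBall hwO.1)) with h' | h'
        · exact h'
        exfalso
        have hwr : dist w z₀ = r := mem_sphere.mp hw
        refine pointwise w hwO h' (hδ ?_ ?_)
        · rw [hwr]; exact hrδ
        · simp only [mem_compl_iff, mem_singleton_iff]
          intro hww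
          rw [hww] at hwr
          simp at hwr
          exact hrpos.ne hwr
      obtain ⟨w₁, hw₁mem, hw₁max⟩ := (isCompact_sphere z₀ r).exists_isMaxOn
        (NormedSpace.sphere_nonempty.mpr hrpos.le)
        (hucont.mono (fun w hw => ball_subset_closedBall
          ((hcbO (sphere_subset_closedBall hw)).1)))
      have hm : u w₁ < 0 := hsph w₁ hw₁mem
      set ε := -(u w₁) / (2*r^2) with hεdef
      have hεpos : 0 < ε := div_pos (neg_pos.mpr hm) (by positivity)
      set v : ℂ → ℝ := fun z => u z + ε * normSq (z - z₀) with hvdef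
      have hvcont : ContinuousOn v (closedBall z₀ r) := by
        refine ContinuousOn.add ?_ (Continuous.continuousOn (continuous_const.mul (Complex.continuous_normSq.comp (continuous_id.sub continuous_const))))
        exact hucont.mono (fun w hw => ball_subset_closedBall ((hcbO hw).1))
      obtain ⟨q, hqmem, hqmax⟩ := (isCompact_closedBall z₀ r).exists_isMaxOn
        ⟨z₀, mem_closedBall_self hrpos.le⟩ hvcont
      have hnormSq : ∀ w : ℂ, normSq (w - z₀) = (dist w z₀)^2 := by
        intro w
        rw [Complex.dist_eq, ← Complex.sq_norm]
      have hv0 : v z₀ = 0 := by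
        simp only [hvdef, sub_self]
        rw [hzero]
        simp
      have hqball : q ∈ ball z₀ r := by
        rcases lt_or_eq_of_le (mem_closedBall.mp hqmem) with h' | h'
        · exact mem_ball.mpr h'
        exfalso
        have hq1 : u q ≤ u w₁ := isMaxOn_iff.mp hw₁max q (mem_sphere.mpr h')
        have hq2 : v z₀ ≤ v q := isMaxOn_iff.mp hqmax z₀ (mem_closedBall_self hrpos.le)
        have hq3 : v q = u q + ε * r^2 := by
          simp only [hvdef]
          rw [hnormSq, h']
        have hq4 : ε * r^2 = -(u w₁)/2 := by
          rw [hεdef]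
          field_simp
        rw [hv0] at hq2
        rw [hq3, hq4] at hq2
        linarith
      have hlocmax : IsLocalMax v q := hqmax.isLocalMax (closedBall_mem_nhds_of_mem hqball)
      have hqO : q ∈ O := hcbO (ball_subset_closedBall hqball)
      have hk := localkey q hqO z₀ ε hlocmax
      have hnn := hlap_nonneg q hqO
      linarith
  -- final connectedness assembly
  have hC₁closed : IsClosed (closedBall (0:ℂ) 1 ∩ f ⁻¹' (closure (Ω 1))) :=
    hfc.preimage_isClosed_of_isClosed Metric.isClosed_closedBall isClosed_closure
  have hC₂closed : IsClosed (closedBall (0:ℂ) 1 ∩ f ⁻¹' ((Ω 1)ᶜ)) :=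
    hfc.preimage_isClosed_of_isClosed Metric.isClosed_closedBall hΩopen.isClosed_compl
  set C₁ := closedBall (0:ℂ) 1 ∩ f ⁻¹' (closure (Ω 1)) with hC₁def
  set C₂ := closedBall (0:ℂ) 1 ∩ f ⁻¹' ((Ω 1)ᶜ) with hC₂def
  have hcover : ball (0:ℂ) 1 ⊆ C₁ ∪ C₂ := by
    intro z hz
    by_cases h : f z ∈ Ω 1
    · exact Or.inl ⟨ball_subset_closedBall hz, subset_closure h⟩
    · exact Or.inr ⟨ball_subset_closedBall hz, h⟩
  have hdisj : ball (0:ℂ) 1 ∩ (C₁ ∩ C₂) = ∅ := by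
    rw [eq_empty_iff_forall_notMem]
    rintro z ⟨hzb, ⟨-, hz1⟩, ⟨-, hz2⟩⟩
    have hzU : f z ∈ U := hclU hz1
    have : u z < 0 := step3 z ⟨hzb, hzU⟩
    apply hz2
    rw [hΩeq]
    exact ⟨hzU, this⟩
  have hne₁ : (ball (0:ℂ) 1 ∩ C₁).Nonempty := by
    -- approach the boundary point f 1 from inside
    have h1s : (1:ℂ) ∈ sphere (0:ℂ) 1 := by simp
    have hf1 : f 1 ∈ frontier (Ω 1) := hbd 1 h1mem (mem_image_of_mem _ h1s)
    have hf1U : f 1 ∈ U := hclU (frontier_subset_closure hf1)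
    have hcw : ContinuousWithinAt f (closedBall (0:ℂ) 1) 1 :=
      hfc 1 (sphere_subset_closedBall h1s)
    have hev : ∀ᶠ w in 𝓝[closedBall (0:ℂ) 1] (1:ℂ), f w ∈ U :=
      hcw (hUopen.mem_nhds hf1U)
    have htends : Tendsto (fun t : ℝ => (t:ℂ)) (𝓝[Ico (0:ℝ) 1] 1)
        (𝓝[closedBall (0:ℂ) 1] (1:ℂ)) := by
      apply tendsto_nhdsWithin_of_tendsto_nhds_of_eventually_within
      · have := Complex.continuous_ofReal.tendsto (1:ℝ)
        rw [Complex.ofReal_one] at this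
        exact this.mono_left nhdsWithin_le_nhds
      · refine eventually_nhdsWithin_of_forall (fun t ht => ?_)
        rw [mem_closedBall]
        simp only [dist_zero_right, Complex.norm_real, Real.norm_eq_abs]
        rw [_root_.abs_of_nonneg ht.1]
        exact ht.2.le
    have hevin := htends.eventually hev
    have hne : (𝓝[Ico (0:ℝ) 1] (1:ℝ)).NeBot := by
      apply mem_closure_iff_nhdsWithin_neBot.mp
      rw [closure_Ico zero_ne_one]
      exact ⟨zero_le_one, le_rfl⟩
    obtain ⟨t, ht, htU⟩ := (eventually_nhdsWithin_of_forall
      (fun t (ht : t ∈ Ico (0:ℝ) 1) => ht)).and hevin |>.exists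
    have htball : ((t:ℂ)) ∈ ball (0:ℂ) 1 := by
      rw [mem_ball]
      simp only [dist_zero_right, Complex.norm_real, Real.norm_eq_abs]
      rw [_root_.abs_of_nonneg ht.1]
      exact ht.2
    have htO : ((t:ℂ)) ∈ O := ⟨htball, htU⟩
    have : f ((t:ℂ)) ∈ Ω 1 := by
      rw [hΩeq]
      exact ⟨htU, step3 _ htO⟩
    exact ⟨(t:ℂ), htball, ball_subset_closedBall htball, subset_closure this⟩
  have hC₂empty : ball (0:ℂ) 1 ∩ C₂ = ∅ := by
    by_contra hne₂
    rw [← Ne, ← nonempty_iff_ne_empty] at hne₂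
    have := isPreconnected_closed_iff.mp (convex_ball (0:ℂ) 1).isPreconnected
      C₁ C₂ hC₁closed hC₂closed hcover hne₁ hne₂
    rw [hdisj] at this
    exact not_nonempty_empty this
  rintro x ⟨z, hz, rfl⟩
  by_contra hx
  have : z ∈ ball (0:ℂ) 1 ∩ C₂ := ⟨hz, ball_subset_closedBall hz, hx⟩
  rw [hC₂empty] at this
  exact this
end
end

section
/- Let Ω ⊂ ℂ² be a strictly pseudoconvex domain, M ⊂ ∂Ω a totally real 2-dimensional submanifold, and g : Δ → Ω an injective holomorphic map extending C¹-smoothly to Δ̄ with γ := ∂(g(Δ)) ⊂ M. Then for every point p ∈ γ, the tangent line T_pγ is transverse to the characteristic field of directions χ(M, Ω), i.e., T_pγ ≠ ⟨ξ_p⟩. -/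
open Set Metric Complex
open Filter Topology

noncomputable section

/-- The holomorphic tangent space `H_p∂Ω := T_p∂Ω ∩ i·T_p∂Ω` (via tangent cones). -/
def holTangentAt (Ω : Set (ℂ × ℂ)) (p : ℂ × ℂ) : Set (ℂ × ℂ) :=
  tangentConeAt ℝ (frontier Ω) p ∩
    {v | ∃ w ∈ tangentConeAt ℝ (frontier Ω) p, v = iSmul w}

/-- The characteristic direction `⟨ξ_p⟩ = H_p∂Ω ∩ T_pM` at `p ∈ M ⊆ ∂Ω`. -/
def charDirSet (M Ω : Set (ℂ × ℂ)) (p : ℂ × ℂ) : Set (ℂ × ℂ) :=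
  holTangentAt Ω p ∩ tangentConeAt ℝ M p

/-- `M ⊆ ℂ²` is totally real: `T_pM ∩ i·T_pM = {0}` for all `p ∈ M`. -/
def TotallyReal (M : Set (ℂ × ℂ)) : Prop :=
  ∀ p ∈ M, ∀ v ∈ tangentConeAt ℝ M p, iSmul v ∈ tangentConeAt ℝ M p → v = 0

/-- `M` is a smooth 2-dimensional submanifold of `ℂ²` (via local regular parametrizations). -/
def IsSubmanifold2 (M : Set (ℂ × ℂ)) : Prop :=
  ∀ p ∈ M, ∃ (U : Set (ℂ × ℂ)) (V : Set (ℝ × ℝ)) (φ : ℝ × ℝ → ℂ × ℂ),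
    IsOpen U ∧ p ∈ U ∧ IsOpen V ∧ ContDiffOn ℝ (⊤ : ℕ∞) φ V ∧ Set.InjOn φ V ∧
    φ '' V = M ∩ U ∧ ∀ q ∈ V, Function.Injective ⇑(fderiv ℝ φ q)





lemma iSmul_eq_smul (v : ℂ × ℂ) : iSmul v = Complex.I • v := by
  simp [iSmul, Prod.smul_def, smul_eq_mul]

lemma iSmul_iSmul (v : ℂ × ℂ) : iSmul (iSmul v) = -v := by
  simp [iSmul_eq_smul, smul_smul, Complex.I_mul_I]

lemma iSmul_real_smul (t : ℝ) (v : ℂ × ℂ) : iSmul (t • v) = t • iSmul v := by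
  rw [iSmul_eq_smul, iSmul_eq_smul, smul_comm]

lemma iSmul_neg (v : ℂ × ℂ) : iSmul (-v) = - iSmul v := by
  simp [iSmul_eq_smul]

-- 1D second derivative local max lemma
lemma no_local_max {φ φ₁ : ℝ → ℝ} {δ c : ℝ} (hδ : 0 < δ)
    (hφ : ∀ t ∈ Ioo (-δ) δ, HasDerivAt φ (φ₁ t) t)
    (hφ₁ : HasDerivAt φ₁ c 0) (hc : 0 < c) (hmax : IsLocalMax φ 0) : False := by
  have h0 : (0:ℝ) ∈ Ioo (-δ) δ := by constructor <;> linarith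
  have hderiv : deriv φ 0 = φ₁ 0 := (hφ 0 h0).deriv
  have hφ₁0 : φ₁ 0 = 0 := by
    rw [← hderiv]; exact hmax.deriv_eq_zero
  -- slope of φ₁ tends to c > 0
  have hslope := hasDerivAt_iff_tendsto_slope.1 hφ₁
  have hev : ∀ᶠ t in 𝓝[≠] (0:ℝ), 0 < slope φ₁ 0 t :=
    hslope.eventually (eventually_gt_nhds hc)
  rw [eventually_nhdsWithin_iff] at hev
  obtain ⟨δ₁, hδ₁, hball⟩ := Metric.eventually_nhds_iff.1 hev
  -- get the local max neighborhood
  obtain ⟨δ₂, hδ₂, hmaxball⟩ := Metric.eventually_nhds_iff.1 hmax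
  set r := min (min δ δ₁) δ₂ / 2 with hr
  have hrpos : 0 < r := by positivity
  have hrδ : r < δ := by
    have : min (min δ δ₁) δ₂ ≤ δ := le_trans (min_le_left _ _) (min_le_left _ _)
    linarith
  have hrδ₁ : r < δ₁ := by
    have : min (min δ δ₁) δ₂ ≤ δ₁ := le_trans (min_le_left _ _) (min_le_right _ _)
    linarith
  have hrδ₂ : r < δ₂ := by
    have : min (min δ δ₁) δ₂ ≤ δ₂ := min_le_right _ _
    linarith
  -- φ₁ > 0 on (0, r]
  have hpos : ∀ t ∈ Ioo (0:ℝ) δ₁, 0 < φ₁ t := by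
    intro t ht
    have htne : t ≠ 0 := ne_of_gt ht.1
    have hdist : dist t 0 < δ₁ := by
      rw [Real.dist_eq, sub_zero, abs_of_pos ht.1]; exact ht.2
    have := hball hdist htne
    rw [slope_def_field, hφ₁0, sub_zero, sub_zero, div_pos_iff] at this
    rcases this with ⟨h1, h2⟩ | ⟨h1, h2⟩
    · exact h1
    · linarith [ht.1]
  -- φ strictly increasing on [0, r]
  have hmono : StrictMonoOn φ (Icc (0:ℝ) r) := by
    apply strictMonoOn_of_deriv_pos (convex_Icc _ _)
    · intro t ht
      have htI : t ∈ Ioo (-δ) δ := by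
        constructor
        · linarith [ht.1]
        · linarith [ht.2, hrδ]
      exact (hφ t htI).continuousAt.continuousWithinAt
    · intro t ht
      rw [interior_Icc] at ht
      have htI : t ∈ Ioo (-δ) δ := by constructor <;> [linarith [ht.1]; linarith [ht.2]]
      rw [(hφ t htI).deriv]
      exact hpos t ⟨ht.1, by linarith [ht.2]⟩
  have h1 : φ 0 < φ r := hmono (by constructor <;> linarith) (by constructor <;> linarith) hrpos
  have h2 : φ r ≤ φ 0 := by
    apply hmaxball
    rw [Real.dist_eq, sub_zero, abs_of_pos hrpos]; linarith
  linarith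



section CR
variable {ρ : ℂ × ℂ → ℝ} {U : Set (ℂ × ℂ)}

lemma hasFDerivAt_of_contDiffOn (hU : IsOpen U) (hρ : ContDiffOn ℝ (⊤:ℕ∞) ρ U)
    {p : ℂ × ℂ} (hp : p ∈ U) : HasFDerivAt ρ (fderiv ℝ ρ p) p :=
  ((hρ.contDiffAt (hU.mem_nhds hp)).differentiableAt (by simp)).hasFDerivAt

lemma hasFDerivAt_fderiv (hU : IsOpen U) (hρ : ContDiffOn ℝ (⊤:ℕ∞) ρ U)
    {p : ℂ × ℂ} (hp : p ∈ U) :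
    HasFDerivAt (fderiv ℝ ρ) (fderiv ℝ (fderiv ℝ ρ) p) p := by
  have h1 : ContDiffAt ℝ (⊤:ℕ∞) ρ p := hρ.contDiffAt (hU.mem_nhds hp)
  have h2 : ContDiffAt ℝ (⊤:ℕ∞) (fderiv ℝ ρ) p := h1.fderiv_right (by simp)
  exact (h2.differentiableAt (by simp)).hasFDerivAt

lemma slice_deriv1 (hU : IsOpen U) (hρ : ContDiffOn ℝ (⊤:ℕ∞) ρ U)
    {G G₁ : ℝ → ℂ × ℂ} {t : ℝ}
    (hG : HasDerivAt G (G₁ t) t) (hGU : G t ∈ U) :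
    HasDerivAt (fun s => ρ (G s)) (fderiv ℝ ρ (G t) (G₁ t)) t :=
  (hasFDerivAt_of_contDiffOn hU hρ hGU).comp_hasDerivAt t hG

lemma slice_deriv2 (hU : IsOpen U) (hρ : ContDiffOn ℝ (⊤:ℕ∞) ρ U)
    {G G₁ : ℝ → ℂ × ℂ} {v₂ : ℂ × ℂ} {t₀ : ℝ}
    (hG : HasDerivAt G (G₁ t₀) t₀) (hG₁ : HasDerivAt G₁ v₂ t₀) (hGU : G t₀ ∈ U) :
    HasDerivAt (fun s => fderiv ℝ ρ (G s) (G₁ s))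
      (fderiv ℝ (fderiv ℝ ρ) (G t₀) (G₁ t₀) (G₁ t₀) + fderiv ℝ ρ (G t₀) v₂) t₀ := by
  have hc : HasDerivAt (fun s => fderiv ℝ ρ (G s)) (fderiv ℝ (fderiv ℝ ρ) (G t₀) (G₁ t₀)) t₀ :=
    (hasFDerivAt_fderiv hU hρ hGU).comp_hasDerivAt t₀ hG
  exact hc.clm_apply hG₁

end CR

section W

lemma wslice_d1 {a b t : ℝ} (h : (a+t)^2+b^2 ≠ 0) :
    HasDerivAt (fun t => ((a+t)^2+b^2)⁻¹ - 1) (-(2*(a+t)) / ((a+t)^2+b^2)^2) t := by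
  have h1 : HasDerivAt (fun t : ℝ => (a+t)^2+b^2) (2*(a+t)) t := by
    have : HasDerivAt (fun t : ℝ => a + t) 1 t := (hasDerivAt_id t).const_add a
    simpa using (this.pow 2).add_const (b^2)
  have := (h1.inv h).sub_const 1
  exact this

lemma wslice_d2 {a b : ℝ} (h : a^2+b^2 ≠ 0) :
    HasDerivAt (fun t : ℝ => -(2*(a+t)) / ((a+t)^2+b^2)^2)
      (-2/(a^2+b^2)^2 + 8*a^2/(a^2+b^2)^4 * (a^2+b^2)) 0 := by
  have hb : HasDerivAt (fun t : ℝ => (a+t)^2+b^2) (2*(a+0)) 0 := by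
    have : HasDerivAt (fun t : ℝ => a + t) 1 0 := (hasDerivAt_id 0).const_add a
    simpa using (this.pow 2).add_const (b^2)
  have hd : HasDerivAt (fun t : ℝ => ((a+t)^2+b^2)^2) (2 * ((a+0)^2+b^2) ^ 1 * (2*(a+0))) 0 :=
    hb.pow 2
  have hn : HasDerivAt (fun t : ℝ => -(2*(a+t))) (-2) 0 := by
    have : HasDerivAt (fun t : ℝ => a + t) 1 0 := (hasDerivAt_id 0).const_add a
    simpa using (this.const_mul (2:ℝ)).fun_neg
  have hne : ((a+0)^2+b^2)^2 ≠ 0 := by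
    have : (a+0)^2+b^2 ≠ 0 := by simpa using h
    exact pow_ne_zero 2 this
  have := hn.div hd hne
  refine this.congr_deriv ?_
  have h' : a^2 + b^2 ≠ 0 := h
  simp only [add_zero, pow_one]
  field_simp
  ring
end W



section LAP
variable {ρ : ℂ × ℂ → ℝ} {U : Set (ℂ × ℂ)}

lemma lap_lineRestr (hU : IsOpen U) (hρ : ContDiffOn ℝ (⊤:ℕ∞) ρ U)
    {z : ℂ × ℂ} (hz : z ∈ U) (v : ℂ × ℂ) :
    lap (lineRestr ρ z v) 0 =
      fderiv ℝ (fderiv ℝ ρ) z v v + fderiv ℝ (fderiv ℝ ρ) z (iSmul v) (iSmul v) := by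
  set L : ℂ →L[ℝ] (ℂ × ℂ) :=
    ((ContinuousLinearMap.id ℂ ℂ).smulRight v).restrictScalars ℝ with hL
  have hLapp : ∀ t : ℂ, L t = t • v := fun t => rfl
  set ℓ : ℂ → ℂ × ℂ := fun t => z + L t with hℓ
  have hρℓ : lineRestr ρ z v = fun t => ρ (ℓ t) := by
    funext t
    simp only [lineRestr, hℓ, hLapp, Prod.smul_def, smul_eq_mul]
  have hℓ0 : ℓ 0 = z := by simp [hℓ]
  have hℓd : ∀ t : ℂ, HasFDerivAt ℓ L t := fun t => (L.hasFDerivAt).const_add z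
  -- eventually, the first derivative is Φ
  set Φ : ℂ → (ℂ →L[ℝ] ℝ) := fun t => (fderiv ℝ ρ (ℓ t)).comp L with hΦ
  have hV : IsOpen (ℓ ⁻¹' U) := hU.preimage (by fun_prop)
  have h0V : (0:ℂ) ∈ ℓ ⁻¹' U := by simp [hℓ0, hz]
  have hEv : fderiv ℝ (fun t => ρ (ℓ t)) =ᶠ[𝓝 (0:ℂ)] Φ := by
    filter_upwards [hV.mem_nhds h0V] with t ht
    exact ((hasFDerivAt_of_contDiffOn hU hρ ht).comp t (hℓd t)).fderiv
  -- derivative of Φ at 0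
  set C : ((ℂ × ℂ) →L[ℝ] ℝ) →L[ℝ] (ℂ →L[ℝ] ℝ) :=
    (ContinuousLinearMap.compL ℝ ℂ (ℂ × ℂ) ℝ).flip L with hC
  have hΦeq : Φ = fun t => C (fderiv ℝ ρ (ℓ t)) := rfl
  have hΦd : HasFDerivAt Φ (C.comp ((fderiv ℝ (fderiv ℝ ρ) z).comp L)) 0 := by
    rw [hΦeq]
    have h1 : HasFDerivAt (fun t => fderiv ℝ ρ (ℓ t)) ((fderiv ℝ (fderiv ℝ ρ) z).comp L) 0 := by
      have h0' : ℓ 0 ∈ U := by rw [hℓ0]; exact hz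
      have h1' := (hasFDerivAt_fderiv hU hρ h0').comp (0:ℂ) (hℓd 0)
      rwa [hℓ0] at h1'
    exact C.hasFDerivAt.comp 0 h1
  have key : fderiv ℝ (fderiv ℝ (fun t => ρ (ℓ t))) 0 =
      C.comp ((fderiv ℝ (fderiv ℝ ρ) z).comp L) := by
    rw [hEv.fderiv_eq]
    exact hΦd.fderiv
  have happ : ∀ e e' : ℂ, fderiv ℝ (fderiv ℝ (fun t => ρ (ℓ t))) 0 e e' =
      fderiv ℝ (fderiv ℝ ρ) z (e • v) (e' • v) := by
    intro e e'
    rw [key]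
    rfl
  rw [hρℓ]
  rw [lap, iteratedFDeriv_two_apply, iteratedFDeriv_two_apply]
  simp only [Matrix.cons_val_zero, Matrix.cons_val_one, Matrix.head_cons]
  rw [happ 1 1, happ Complex.I Complex.I, one_smul, iSmul_eq_smul]

end LAP

lemma normSq_hasFDerivAt (ζ : ℂ) :
    HasFDerivAt (fun z : ℂ => Complex.normSq z)
      ((ζ.re • Complex.reCLM + ζ.re • Complex.reCLM) +
        (ζ.im • Complex.imCLM + ζ.im • Complex.imCLM)) ζ := by
  have hre : HasFDerivAt (fun z : ℂ => z.re) (Complex.reCLM : ℂ →L[ℝ] ℝ) ζ :=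
    Complex.reCLM.hasFDerivAt
  have him : HasFDerivAt (fun z : ℂ => z.im) (Complex.imCLM : ℂ →L[ℝ] ℝ) ζ :=
    Complex.imCLM.hasFDerivAt
  have h1 := (hre.fun_mul hre).fun_add (him.fun_mul him)
  have : (fun z : ℂ => Complex.normSq z) = fun z : ℂ => z.re * z.re + z.im * z.im := by
    funext z; simp [Complex.normSq_apply]
  rw [this]
  simpa using h1

lemma fderiv_eq_zero_on_cone {f : ℂ × ℂ → ℝ} {s : Set (ℂ × ℂ)} {p : ℂ × ℂ} {A : (ℂ × ℂ) →L[ℝ] ℝ}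
    (hA : HasFDerivAt f A p) (h0 : ∀ x ∈ s, f x = 0) (hp : f p = 0)
    {u : ℂ × ℂ} (hu : u ∈ tangentConeAt ℝ s p) : A u = 0 := by
  have h1 : HasFDerivWithinAt f A s p := hA.hasFDerivWithinAt
  have h2 : HasFDerivWithinAt f 0 s p :=
    (hasFDerivWithinAt_const (𝕜 := ℝ) (0:ℝ) p s).congr (fun x hx => h0 x hx) hp
  simpa using h1.unique_on h2 hu

lemma cone_sphere {ζ s : ℂ} (hζ : ζ ∈ sphere (0:ℂ) 1)
    (hs : s ∈ tangentConeAt ℝ (sphere (0:ℂ) 1) ζ) : ∃ t : ℝ, s = t • (Complex.I * ζ) := by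
  have hone : ∀ x ∈ sphere (0:ℂ) 1, Complex.normSq x = 1 := by
    intro x hx
    rw [mem_sphere_zero_iff_norm] at hx
    rw [Complex.normSq_eq_norm_sq, hx, one_pow]
  have hB : HasFDerivWithinAt (fun z : ℂ => Complex.normSq z)
      ((ζ.re • Complex.reCLM + ζ.re • Complex.reCLM) +
        (ζ.im • Complex.imCLM + ζ.im • Complex.imCLM)) (sphere 0 1) ζ :=
    (normSq_hasFDerivAt ζ).hasFDerivWithinAt
  have h0 : HasFDerivWithinAt (fun z : ℂ => Complex.normSq z) 0 (sphere 0 1) ζ :=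
    (hasFDerivWithinAt_const (𝕜 := ℝ) (1:ℝ) ζ (sphere 0 1)).congr (fun x hx => hone x hx) (hone ζ hζ)
  have hzero := hB.unique_on h0 hs
  have he : ζ.re * s.re + ζ.im * s.im = 0 := by
    have := hzero
    simp only [ContinuousLinearMap.add_apply, ContinuousLinearMap.smul_apply,
      Complex.reCLM_apply, Complex.imCLM_apply, ContinuousLinearMap.zero_apply,
      smul_eq_mul] at this
    linarith
  have hn : ζ.re * ζ.re + ζ.im * ζ.im = 1 := by
    have := hone ζ hζ
    rwa [Complex.normSq_apply] at this
  refine ⟨ζ.re * s.im - ζ.im * s.re, ?_⟩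
  apply Complex.ext
  · simp only [Complex.real_smul, Complex.mul_re, Complex.mul_im, Complex.ofReal_re,
      Complex.ofReal_im, Complex.I_re, Complex.I_im]
    linear_combination (-s.re) * hn + ζ.re * he
  · simp only [Complex.real_smul, Complex.mul_re, Complex.mul_im, Complex.ofReal_re,
      Complex.ofReal_im, Complex.I_re, Complex.I_im]
    linear_combination (-s.im) * hn + ζ.im * he



section HOLO
variable {E : Type*} [NormedAddCommGroup E] [NormedSpace ℂ E] [CompleteSpace E]

lemma hasDerivAt_real_line {f : ℂ → E} {x : ℂ} (hf : DifferentiableAt ℂ f x)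
    (z e : ℂ) {t : ℝ} (hx : z + t • e = x) :
    HasDerivAt (fun s : ℝ => f (z + s • e)) (e • deriv f x) t := by
  have hline : HasDerivAt (fun s : ℝ => z + s • e) e t := by
    simpa using ((hasDerivAt_id t).smul_const e).const_add z
  have hD : HasFDerivAt f
      ((ContinuousLinearMap.smulRight (1 : ℂ →L[ℂ] ℂ) (deriv f x)).restrictScalars ℝ) x := by
    have h1 : HasDerivAt f (deriv f x) x := hf.hasDerivAt
    exact (hasDerivAt_iff_hasFDerivAt.1 h1).restrictScalars ℝ
  have hcomp := HasFDerivAt.comp_hasDerivAt t (by rw [hx]; exact hD) hline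
  simpa [Function.comp_def] using hcomp

lemma deriv_differentiableAt {f : ℂ → E} {s : Set ℂ} (hs : IsOpen s)
    (hf : DifferentiableOn ℂ f s) {x : ℂ} (hx : x ∈ s) :
    DifferentiableAt ℂ (deriv f) x := by
  have h1 : ContDiffAt ℂ (⊤:ℕ∞) f x := (hf.contDiffOn hs).contDiffAt (hs.mem_nhds hx)
  have h2 : ContDiffAt ℂ (⊤:ℕ∞) (fderiv ℂ f) x := h1.fderiv_right (by simp)
  have h3 : DifferentiableAt ℂ (fun z => fderiv ℂ f z 1) x :=
    (h2.differentiableAt (by simp)).clm_apply (differentiableAt_const 1)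
  have h4 : deriv f = fun z => fderiv ℂ f z 1 := by
    funext z; rw [fderiv_apply_one_eq_deriv]
  rw [h4]; exact h3

end HOLO

lemma uniqueDiffOn_cb : UniqueDiffOn ℝ (closedBall (0:ℂ) 1) := by
  apply uniqueDiffOn_convex (convex_closedBall _ _)
  rw [interior_closedBall (0:ℂ) one_ne_zero]
  exact ⟨0, by simp⟩

lemma fderivWithin_boundary_clinear {g : ℂ → ℂ × ℂ}
    (hghol : DifferentiableOn ℂ g (ball (0:ℂ) 1)) (hgC1 : ContDiffOn ℝ 1 g (closedBall (0:ℂ) 1))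
    {ζ : ℂ} (hζ : ζ ∈ closedBall (0:ℂ) 1) (x : ℂ) :
    fderivWithin ℝ g (closedBall 0 1) ζ (Complex.I * x)
      = Complex.I • (fderivWithin ℝ g (closedBall 0 1) ζ x) := by
  set T : ℂ → (ℂ →L[ℝ] (ℂ × ℂ)) := fun y => fderivWithin ℝ g (closedBall 0 1) y with hT
  have hcont : ContinuousOn T (closedBall 0 1) :=
    hgC1.continuousOn_fderivWithin uniqueDiffOn_cb le_rfl
  set r : ℕ → ℝ := fun n => 1 - 1/(n+1) with hr
  set zn : ℕ → ℂ := fun n => (r n : ℝ) • ζ with hzn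
  have hrn : ∀ n, 0 ≤ r n ∧ r n < 1 := by
    intro n
    have h1 : 0 < 1/((n:ℝ)+1) := by positivity
    have h2 : 1/((n:ℝ)+1) ≤ 1 := by
      rw [div_le_one (by positivity)]; simp
    have h1' : 0 < ((n:ℝ)+1)⁻¹ := by rw [← one_div]; exact h1
    have h2' : ((n:ℝ)+1)⁻¹ ≤ 1 := by rw [← one_div]; exact h2
    constructor <;> simp only [hr] <;> rw [one_div] <;> linarith
  have hznball : ∀ n, zn n ∈ ball (0:ℂ) 1 := by
    intro n
    rw [mem_ball_zero_iff, hzn]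
    have : ‖(r n : ℝ) • ζ‖ = |r n| * ‖ζ‖ := by rw [norm_smul, Real.norm_eq_abs]
    rw [this, _root_.abs_of_nonneg (hrn n).1]
    have hζ1 : ‖ζ‖ ≤ 1 := mem_closedBall_zero_iff.1 hζ
    nlinarith [(hrn n).2, (hrn n).1, norm_nonneg ζ]
  have hzntend : Tendsto zn atTop (𝓝 ζ) := by
    have h1 : Tendsto r atTop (𝓝 1) := by
      rw [hr]
      have := tendsto_one_div_add_atTop_nhds_zero_nat (𝕜 := ℝ)
      simpa using (tendsto_const_nhds (x := (1:ℝ))).sub this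
    have := h1.smul_const ζ
    simpa [hzn] using this
  have hzn_within : Tendsto zn atTop (𝓝[closedBall (0:ℂ) 1] ζ) :=
    tendsto_nhdsWithin_of_tendsto_nhds_of_eventually_within _ hzntend
      (Eventually.of_forall fun n => ball_subset_closedBall (hznball n))
  have hTn : ∀ n, T (zn n) (Complex.I * x) = Complex.I • (T (zn n) x) := by
    intro n
    have hmem : closedBall (0:ℂ) 1 ∈ 𝓝 (zn n) :=
      Filter.mem_of_superset (isOpen_ball.mem_nhds (hznball n)) ball_subset_closedBall
    have hdiff : DifferentiableAt ℂ g (zn n) :=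
      hghol.differentiableAt (isOpen_ball.mem_nhds (hznball n))
    have h1 : T (zn n) = fderiv ℝ g (zn n) := by rw [hT]; exact fderivWithin_of_mem_nhds hmem
    rw [h1, hdiff.fderiv_restrictScalars ℝ]
    simp only [ContinuousLinearMap.coe_restrictScalars']
    have : Complex.I * x = Complex.I • x := rfl
    rw [this, map_smul]
  have hTcont : ContinuousWithinAt T (closedBall 0 1) ζ := hcont ζ hζ
  have hF1 : Tendsto (fun n => T (zn n) (Complex.I * x)) atTop (𝓝 (T ζ (Complex.I * x))) := by
    exact ((ContinuousLinearMap.apply ℝ (ℂ × ℂ) (Complex.I * x)).continuous.tendsto _).comp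
      (hTcont.tendsto.comp hzn_within)
  have hF2 : Tendsto (fun n => Complex.I • T (zn n) x) atTop (𝓝 (Complex.I • T ζ x)) := by
    have := ((ContinuousLinearMap.apply ℝ (ℂ × ℂ) x).continuous.tendsto _).comp
      (hTcont.tendsto.comp hzn_within)
    exact (continuous_const_smul Complex.I).continuousAt.tendsto.comp this
  have : (fun n => T (zn n) (Complex.I * x)) = fun n => Complex.I • T (zn n) x := funext hTn
  rw [this] at hF1
  exact tendsto_nhds_unique hF1 hF2

lemma clinear_formula {T : ℂ →L[ℝ] (ℂ × ℂ)}
    (hT : ∀ x : ℂ, T (Complex.I * x) = Complex.I • T x) (u : ℂ) :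
    T u = u • T 1 := by
  have hu : u = u.re • (1:ℂ) + u.im • Complex.I := by
    apply Complex.ext <;> simp
  have hI : T Complex.I = Complex.I • T 1 := by
    have := hT 1
    simpa using this
  conv_lhs => rw [hu]
  conv_rhs => rw [hu]
  rw [map_add, map_smul, map_smul, hI, add_smul]
  congr 1
  · rw [smul_assoc, one_smul]
  · rw [smul_assoc]


section HOPF

variable {ρ : ℂ × ℂ → ℝ} {U : Set (ℂ × ℂ)}

lemma wsum_pos {x y : ℝ} (h : x^2+y^2 ≠ 0) :
    0 < (-2/(x^2+y^2)^2 + 8*x^2/(x^2+y^2)^4 * (x^2+y^2)) +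
      (-2/(y^2+x^2)^2 + 8*y^2/(y^2+x^2)^4 * (y^2+x^2)) := by
  have heq : (-2/(x^2+y^2)^2 + 8*x^2/(x^2+y^2)^4 * (x^2+y^2)) +
      (-2/(y^2+x^2)^2 + 8*y^2/(y^2+x^2)^4 * (y^2+x^2)) = 4/(x^2+y^2)^2 := by
    have h1 : y^2 + x^2 = x^2 + y^2 := by ring
    rw [h1]
    field_simp
    ring
  rw [heq]
  have h2 : 0 < x^2+y^2 := lt_of_le_of_ne (by positivity) (Ne.symm h)
  positivity

set_option maxHeartbeats 1000000 in
lemma interior_max_impossible (hU : IsOpen U) (hρs : StrictPSHOn ρ U)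
    {g : ℂ → ℂ × ℂ} (hghol : DifferentiableOn ℂ g (ball (0:ℂ) 1))
    (hgball : ∀ ζ ∈ ball (0:ℂ) 1, g ζ ∈ U) {ε : ℝ} (hε : 0 < ε)
    {z₀ : ℂ} (hz₀ : z₀ ∈ ball (0:ℂ) 1 \ closedBall (0:ℂ) (1/2))
    (hmax : IsLocalMax (fun ζ => ρ (g ζ) + ε * ((Complex.normSq ζ)⁻¹ - 1)) z₀) : False := by
  obtain ⟨hρsm, hρpsh⟩ := hρs
  have hz₀b : z₀ ∈ ball (0:ℂ) 1 := hz₀.1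
  have hAopen : IsOpen (ball (0:ℂ) 1 \ closedBall (0:ℂ) (1/2)) :=
    isOpen_ball.sdiff Metric.isClosed_closedBall
  obtain ⟨δ, hδpos, hδball⟩ := Metric.isOpen_iff.1 hAopen z₀ hz₀
  have hGe_mem : ∀ (e : ℂ), ‖e‖ = 1 → ∀ t ∈ Ioo (-δ) δ,
      z₀ + t • e ∈ ball (0:ℂ) 1 \ closedBall (0:ℂ) (1/2) := by
    intro e he t ht
    apply hδball
    rw [mem_ball, dist_eq_norm]
    simp only [add_sub_cancel_left]
    rw [norm_smul, Real.norm_eq_abs, he, mul_one]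
    rw [abs_lt]
    exact ⟨ht.1, ht.2⟩
  -- the z₀ quantities
  set v : ℂ × ℂ := deriv g z₀ with hv
  set g₂ : ℂ × ℂ := deriv (deriv g) z₀ with hg₂
  set A : (ℂ × ℂ) →L[ℝ] ℝ := fderiv ℝ ρ (g z₀) with hA
  set H : (ℂ × ℂ) →L[ℝ] ((ℂ × ℂ) →L[ℝ] ℝ) := fderiv ℝ (fderiv ℝ ρ) (g z₀) with hH
  -- the main per-direction argument
  have main : ∀ (e : ℂ), ‖e‖ = 1 → ∀ (wd : ℝ → ℝ) (cw : ℝ),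
      (∀ t ∈ Ioo (-δ) δ, HasDerivAt (fun s : ℝ => ((Complex.normSq (z₀ + s • e))⁻¹ - 1)) (wd t) t) →
      HasDerivAt wd cw 0 →
      ¬ (0 < H (e • v) (e • v) + A (e • e • g₂) + ε * cw) := by
    intro e he wd cw hwd hwd2 hpos
    -- slice derivative function of ρ ∘ g along the line
    set ψ : ℝ → ℝ := fun t => fderiv ℝ ρ (g (z₀ + t • e)) (e • deriv g (z₀ + t • e)) with hψ
    have hψd : ∀ t ∈ Ioo (-δ) δ, HasDerivAt (fun s : ℝ => ρ (g (z₀ + s • e))) (ψ t) t := by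
      intro t ht
      have hmem := hGe_mem e he t ht
      have hdg : DifferentiableAt ℂ g (z₀ + t • e) :=
        hghol.differentiableAt (isOpen_ball.mem_nhds hmem.1)
      exact slice_deriv1 (G := fun s : ℝ => g (z₀ + s • e))
        (G₁ := fun s : ℝ => e • deriv g (z₀ + s • e)) hU hρsm
        (hasDerivAt_real_line hdg z₀ e rfl) (hgball _ hmem.1)
    have h0mem : (0:ℝ) ∈ Ioo (-δ) δ := by constructor <;> linarith
    have hz₀e : z₀ + (0:ℝ) • e = z₀ := by simp
    have hψd2 : HasDerivAt ψ (H (e • v) (e • v) + A (e • e • g₂)) 0 := by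
      have hdg : DifferentiableAt ℂ g (z₀ + (0:ℝ) • e) := by
        rw [hz₀e]; exact hghol.differentiableAt (isOpen_ball.mem_nhds hz₀b)
      have hG : HasDerivAt (fun s : ℝ => g (z₀ + s • e)) (e • deriv g (z₀ + (0:ℝ) • e)) 0 :=
        hasDerivAt_real_line hdg z₀ e rfl
      have hdg' : DifferentiableAt ℂ (deriv g) z₀ := deriv_differentiableAt isOpen_ball hghol hz₀b
      have hG₁ : HasDerivAt (fun s : ℝ => e • deriv g (z₀ + s • e)) (e • (e • deriv (deriv g) z₀)) 0 := by
        have := (hasDerivAt_real_line hdg' z₀ e hz₀e).fun_const_smul e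
        simpa using this
      have hGU : g (z₀ + (0:ℝ) • e) ∈ U := by rw [hz₀e]; exact hgball _ hz₀b
      have := slice_deriv2 (G := fun s : ℝ => g (z₀ + s • e))
        (G₁ := fun s : ℝ => e • deriv g (z₀ + s • e)) hU hρsm hG hG₁ hGU
      simp only [hz₀e] at this
      exact this
    -- the slice of the full function
    set Φ : ℝ → ℝ := fun t => ψ t + ε * wd t with hΦ
    have hΦd : ∀ t ∈ Ioo (-δ) δ,
        HasDerivAt (fun s : ℝ => ρ (g (z₀ + s • e)) + ε * ((Complex.normSq (z₀ + s • e))⁻¹ - 1)) (Φ t) t := by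
      intro t ht
      exact (hψd t ht).add ((hwd t ht).const_mul ε)
    have hΦd2 : HasDerivAt Φ (H (e • v) (e • v) + A (e • e • g₂) + ε * cw) 0 :=
      hψd2.add (hwd2.const_mul ε)
    -- local max of the slice
    have hlm : IsLocalMax (fun t : ℝ => ρ (g (z₀ + t • e)) + ε * ((Complex.normSq (z₀ + t • e))⁻¹ - 1)) 0 := by
      have hcont : ContinuousAt (fun t : ℝ => z₀ + t • e) 0 := by fun_prop
      have ht : Filter.Tendsto (fun t : ℝ => z₀ + t • e) (𝓝 0) (𝓝 z₀) := by
        have := hcont.tendsto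
        rwa [hz₀e] at this
      unfold IsLocalMax IsMaxFilter
      have hev := ht.eventually hmax
      filter_upwards [hev] with t htle
      simpa [hz₀e] using htle
    exact no_local_max hδpos hΦd hΦd2 hpos hlm
  -- now the sum over e = 1 and e = I is positive
  have hz₀ne : Complex.normSq z₀ ≠ 0 := by
    intro h
    rw [Complex.normSq_eq_zero] at h
    rw [h] at hz₀
    exact hz₀.2 (by norm_num [mem_closedBall])
  set x : ℝ := z₀.re with hx
  set y : ℝ := z₀.im with hy
  have hs : Complex.normSq z₀ = x^2 + y^2 := by rw [Complex.normSq_apply]; ring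
  have hsne : x^2 + y^2 ≠ 0 := by rw [← hs]; exact hz₀ne
  have hspos : 0 < x^2 + y^2 := lt_of_le_of_ne (by positivity) (Ne.symm hsne)
  -- w-slice for e = 1
  have hwf1 : (fun t : ℝ => ((Complex.normSq (z₀ + t • (1:ℂ)))⁻¹ - 1)) =
      fun t : ℝ => (((x + t)^2 + y^2)⁻¹ - 1) := by
    funext t
    have h1 : Complex.normSq (z₀ + t • (1:ℂ)) = (x + t)^2 + y^2 := by
      rw [Complex.normSq_apply]
      simp [Complex.add_re, Complex.add_im, Complex.real_smul]
      ring
    rw [h1]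
  have hden1 : ∀ t ∈ Ioo (-δ) δ, ((x + t)^2 + y^2) ≠ 0 := by
    intro t ht
    have hmem := hGe_mem 1 (by simp) t ht
    have hne : z₀ + t • (1:ℂ) ≠ 0 := by
      intro h; rw [h] at hmem; exact hmem.2 (by norm_num [mem_closedBall])
    have h1 : Complex.normSq (z₀ + t • (1:ℂ)) = (x + t)^2 + y^2 := by
      rw [Complex.normSq_apply]
      simp [Complex.add_re, Complex.add_im, Complex.real_smul]
      ring
    rw [← h1]
    simpa [Complex.normSq_eq_zero] using hne
  -- w-slice for e = I
  have hwfI : (fun t : ℝ => ((Complex.normSq (z₀ + t • Complex.I))⁻¹ - 1)) =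
      fun t : ℝ => (((y + t)^2 + x^2)⁻¹ - 1) := by
    funext t
    have h1 : Complex.normSq (z₀ + t • Complex.I) = (y + t)^2 + x^2 := by
      rw [Complex.normSq_apply]
      simp [Complex.add_re, Complex.add_im, Complex.real_smul]
      ring
    rw [h1]
  have hdenI : ∀ t ∈ Ioo (-δ) δ, ((y + t)^2 + x^2) ≠ 0 := by
    intro t ht
    have hmem := hGe_mem Complex.I (by simp) t ht
    have hne : z₀ + t • Complex.I ≠ 0 := by
      intro h; rw [h] at hmem; exact hmem.2 (by norm_num [mem_closedBall])
    have h1 : Complex.normSq (z₀ + t • Complex.I) = (y + t)^2 + x^2 := by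
      rw [Complex.normSq_apply]
      simp [Complex.add_re, Complex.add_im, Complex.real_smul]
      ring
    rw [← h1]
    simpa [Complex.normSq_eq_zero] using hne
  set wd1 : ℝ → ℝ := fun t => -(2*(x+t)) / ((x+t)^2+y^2)^2 with hwd1def
  set wdI : ℝ → ℝ := fun t => -(2*(y+t)) / ((y+t)^2+x^2)^2 with hwdIdef
  have hw1 : ∀ t ∈ Ioo (-δ) δ,
      HasDerivAt (fun s : ℝ => ((Complex.normSq (z₀ + s • (1:ℂ)))⁻¹ - 1)) (wd1 t) t := by
    intro t ht; rw [hwf1]; exact wslice_d1 (hden1 t ht)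
  have hwI : ∀ t ∈ Ioo (-δ) δ,
      HasDerivAt (fun s : ℝ => ((Complex.normSq (z₀ + s • Complex.I))⁻¹ - 1)) (wdI t) t := by
    intro t ht; rw [hwfI]; exact wslice_d1 (hdenI t ht)
  have hsneI : y^2 + x^2 ≠ 0 := by intro h; apply hsne; linarith [h]
  have hw1d2 : HasDerivAt wd1 (-2/(x^2+y^2)^2 + 8*x^2/(x^2+y^2)^4 * (x^2+y^2)) 0 :=
    wslice_d2 hsne
  have hwId2 : HasDerivAt wdI (-2/(y^2+x^2)^2 + 8*y^2/(y^2+x^2)^4 * (y^2+x^2)) 0 :=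
    wslice_d2 hsneI
  have h1' := main 1 (by simp) wd1 _ hw1 hw1d2
  have hI' := main Complex.I (by simp) wdI _ hwI hwId2
  have hbr : 0 ≤ H ((1:ℂ) • v) ((1:ℂ) • v) + H (Complex.I • v) (Complex.I • v) := by
    rw [one_smul]
    by_cases hv0 : v = 0
    · simp [hv0]
    · have hpos := hρpsh (g z₀) (hgball _ hz₀b) v hv0
      rw [lap_lineRestr hU hρsm (hgball _ hz₀b) v, iSmul_eq_smul] at hpos
      linarith
  have hcancel : A ((1:ℂ) • (1:ℂ) • g₂) + A (Complex.I • Complex.I • g₂) = 0 := by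
    have h2 : Complex.I • Complex.I • g₂ = -((1:ℂ) • (1:ℂ) • g₂) := by
      rw [smul_smul, smul_smul, Complex.I_mul_I]
      simp
    rw [h2, map_neg]
    ring
  have hwsum := wsum_pos hsne
  push_neg at h1' hI'
  have hfinal := add_le_add h1' hI'
  rw [← add_assoc] at hfinal
  nlinarith [mul_pos hε hwsum, hbr, hcancel, hfinal]

end HOPF

set_option maxHeartbeats 1000000 in
lemma hopf {ρ : ℂ × ℂ → ℝ} {U : Set (ℂ × ℂ)} (hU : IsOpen U) (hρs : StrictPSHOn ρ U)
    {g : ℂ → ℂ × ℂ} (hghol : DifferentiableOn ℂ g (ball (0:ℂ) 1))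
    (hgC1 : ContDiffOn ℝ 1 g (closedBall (0:ℂ) 1))
    (hgU : ∀ ζ ∈ closedBall (0:ℂ) 1, g ζ ∈ U)
    (hneg : ∀ ζ ∈ ball (0:ℂ) 1, ρ (g ζ) < 0)
    (hzero : ∀ ζ ∈ sphere (0:ℂ) 1, ρ (g ζ) = 0)
    {ζ₀ : ℂ} (hζ₀ : ζ₀ ∈ sphere (0:ℂ) 1) :
    0 < fderiv ℝ ρ (g ζ₀) (fderivWithin ℝ g (closedBall (0:ℂ) 1) ζ₀ ζ₀) := by
  have hballsub : ball (0:ℂ) 1 ⊆ closedBall (0:ℂ) 1 := ball_subset_closedBall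
  have hgc : ContinuousOn g (closedBall (0:ℂ) 1) := hgC1.continuousOn
  have hhc : ContinuousOn (fun ζ => ρ (g ζ)) (closedBall (0:ℂ) 1) :=
    hρs.1.continuousOn.comp hgc hgU
  -- max on the inner circle
  have hsph : sphere (0:ℂ) (1/2) ⊆ ball (0:ℂ) 1 := by
    intro z hz
    rw [mem_sphere_zero_iff_norm] at hz
    rw [mem_ball_zero_iff, hz]; norm_num
  have hnonempty : (sphere (0:ℂ) (1/2)).Nonempty :=
    NormedSpace.sphere_nonempty.mpr (by norm_num)
  obtain ⟨ζm, hζm, hζmax⟩ := (isCompact_sphere (0:ℂ) (1/2)).exists_isMaxOn hnonempty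
    (hhc.mono (subset_trans hsph hballsub))
  set m : ℝ := -(ρ (g ζm)) with hm
  have hmpos : 0 < m := by
    have := hneg ζm (hsph hζm); rw [hm]; linarith
  set ε : ℝ := m/3 with hε
  have hεpos : 0 < ε := by rw [hε]; linarith
  set F : ℂ → ℝ := fun ζ => ρ (g ζ) + ε * ((Complex.normSq ζ)⁻¹ - 1) with hF
  set K : Set ℂ := closedBall (0:ℂ) 1 \ ball (0:ℂ) (1/2) with hK
  have hKsub : K ⊆ closedBall (0:ℂ) 1 := diff_subset
  have hKcpt : IsCompact K := (isCompact_closedBall (0:ℂ) 1).diff isOpen_ball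
  have hKne : K.Nonempty := by
    refine ⟨1, ?_, ?_⟩
    · rw [mem_closedBall_zero_iff]; norm_num
    · rw [mem_ball_zero_iff]; norm_num
  have hKnormge : ∀ z ∈ K, 1/2 ≤ ‖z‖ := by
    intro z hz
    by_contra hlt
    push_neg at hlt
    exact hz.2 (mem_ball_zero_iff.2 hlt)
  have hKnsne : ∀ z ∈ K, Complex.normSq z ≠ 0 := by
    intro z hz h
    have hz0 : z = 0 := Complex.normSq_eq_zero.1 h
    have h2 := hKnormge z hz
    rw [hz0] at h2
    simp at h2
    linarith
  have hwcont : ContinuousOn (fun ζ : ℂ => (Complex.normSq ζ)⁻¹ - 1) K := by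
    apply ContinuousOn.sub ?_ continuousOn_const
    exact ContinuousOn.inv₀ Complex.continuous_normSq.continuousOn hKnsne
  have hFcont : ContinuousOn F K := (hhc.mono hKsub).add (continuousOn_const.mul hwcont)
  obtain ⟨z₀, hz₀K, hz₀max⟩ := hKcpt.exists_isMaxOn hKne hFcont
  have hFz₀ : F z₀ ≤ 0 := by
    by_cases hz₀A : z₀ ∈ ball (0:ℂ) 1 \ closedBall (0:ℂ) (1/2)
    · exfalso
      apply interior_max_impossible hU hρs hghol (fun ζ hζ => hgU ζ (hballsub hζ)) hεpos hz₀A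
      have hAK : ball (0:ℂ) 1 \ closedBall (0:ℂ) (1/2) ⊆ K := by
        intro z hz
        exact ⟨ball_subset_closedBall hz.1, fun h => hz.2 (ball_subset_closedBall h)⟩
      have hKnhds : K ∈ 𝓝 z₀ :=
        mem_of_superset ((isOpen_ball.sdiff Metric.isClosed_closedBall).mem_nhds hz₀A) hAK
      exact hz₀max.isLocalMax hKnhds
    · have hz1 : ‖z₀‖ ≤ 1 := mem_closedBall_zero_iff.1 hz₀K.1
      have hz2 : 1/2 ≤ ‖z₀‖ := hKnormge z₀ hz₀K
      have hns : Complex.normSq z₀ = ‖z₀‖^2 := by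
        rw [Complex.normSq_eq_norm_sq]
      by_cases hlt : ‖z₀‖ < 1
      · -- then z₀ is on the inner circle
        have hz₀le : ‖z₀‖ ≤ 1/2 := by
          by_contra hgt
          push_neg at hgt
          exact hz₀A ⟨mem_ball_zero_iff.2 hlt, fun h => by
            have := mem_closedBall_zero_iff.1 h; linarith⟩
        have hzeq : ‖z₀‖ = 1/2 := le_antisymm hz₀le hz2
        have hsphm : z₀ ∈ sphere (0:ℂ) (1/2) := mem_sphere_zero_iff_norm.2 hzeq
        have hρle : ρ (g z₀) ≤ ρ (g ζm) := hζmax hsphm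
        have hw : (Complex.normSq z₀)⁻¹ - 1 = 3 := by
          rw [hns, hzeq]; norm_num
        rw [hF]
        simp only
        rw [hw]
        rw [hε]
        have : ρ (g ζm) = -m := by rw [hm]; ring
        linarith
      · have hzeq : ‖z₀‖ = 1 := le_antisymm hz1 (not_lt.1 hlt)
        have h0 : ρ (g z₀) = 0 := hzero z₀ (mem_sphere_zero_iff_norm.2 hzeq)
        have hw : (Complex.normSq z₀)⁻¹ - 1 = 0 := by rw [hns, hzeq]; norm_num
        rw [hF]; simp only; rw [hw, h0]; simp
  have hFK : ∀ z ∈ K, F z ≤ 0 := fun z hz => le_trans (hz₀max hz) hFz₀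
  have hζ₀n : ‖ζ₀‖ = 1 := mem_sphere_zero_iff_norm.1 hζ₀
  -- radial estimate
  have hrad : ∀ t : ℝ, t ∈ Ioc (0:ℝ) (1/2) → ρ (g ((1-t) • ζ₀)) ≤ -(2*ε*t) := by
    intro t ht
    have h1t : (0:ℝ) < 1 - t := by linarith [ht.2]
    have hnorm : ‖(1-t) • ζ₀‖ = 1 - t := by
      rw [norm_smul, Real.norm_eq_abs, hζ₀n, mul_one, _root_.abs_of_pos h1t]
    have hmemK : (1-t) • ζ₀ ∈ K := by
      constructor
      · rw [mem_closedBall_zero_iff, hnorm]; linarith [ht.1]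
      · intro hmem
        rw [mem_ball_zero_iff, hnorm] at hmem
        linarith [ht.2, hmem]
    have hFle := hFK _ hmemK
    have hns : Complex.normSq ((1-t) • ζ₀) = (1-t)^2 := by
      rw [Complex.normSq_eq_norm_sq, hnorm]
    rw [hF] at hFle
    simp only at hFle
    rw [hns] at hFle
    have hsq : (0:ℝ) < (1-t)^2 := by positivity
    have hkey : 1 + 2*t ≤ ((1-t)^2)⁻¹ := by
      rw [← one_div, le_div_iff₀ hsq]
      have h5 : (0:ℝ) ≤ t^2 * (3 - 2*t) := mul_nonneg (sq_nonneg t) (by linarith [ht.2])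
      nlinarith [h5]
    have : 2*t ≤ ((1-t)^2)⁻¹ - 1 := by linarith
    nlinarith [hεpos, this, hFle]
  -- derivative extraction
  set T : ℂ →L[ℝ] (ℂ × ℂ) := fderivWithin ℝ g (closedBall (0:ℂ) 1) ζ₀ with hT
  set L : ℂ →L[ℝ] ℝ := (fderiv ℝ ρ (g ζ₀)).comp T with hL
  have hζ₀cb : ζ₀ ∈ closedBall (0:ℂ) 1 := by
    rw [mem_closedBall_zero_iff, hζ₀n]
  have hgdiff : HasFDerivWithinAt g T (closedBall (0:ℂ) 1) ζ₀ :=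
    ((hgC1.differentiableOn one_ne_zero) ζ₀ hζ₀cb).hasFDerivWithinAt
  have hρd : HasFDerivAt ρ (fderiv ℝ ρ (g ζ₀)) (g ζ₀) :=
    hasFDerivAt_of_contDiffOn hU hρs.1 (hgU _ hζ₀cb)
  have hhd : HasFDerivWithinAt (fun ζ => ρ (g ζ)) L (closedBall (0:ℂ) 1) ζ₀ :=
    hρd.comp_hasFDerivWithinAt ζ₀ hgdiff
  -- the radial sequence
  set u : ℕ → ℝ := fun n => 1/((n:ℝ)+2) with hu
  have hupos : ∀ n, 0 < u n := by intro n; rw [hu]; positivity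
  have huhalf : ∀ n, u n ≤ 1/2 := by
    intro n
    rw [hu]
    apply one_div_le_one_div_of_le (by norm_num)
    have : (0:ℝ) ≤ (n:ℝ) := Nat.cast_nonneg n
    linarith
  have hutend : Filter.Tendsto u atTop (𝓝 0) := by
    have h1 := tendsto_one_div_add_atTop_nhds_zero_nat (𝕜 := ℝ)
    have h2 := h1.comp (tendsto_add_atTop_nat 1)
    have : (fun n : ℕ => 1/((n:ℝ)+2)) = (fun n : ℕ => 1/((n:ℝ)+1)) ∘ (fun n => n + 1) := by
      funext n
      simp only [Function.comp_apply]
      push_cast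
      ring_nf
    rw [hu, this]
    exact h2
  set y : ℕ → ℂ := fun n => (1 - u n) • ζ₀ with hy
  have hymem : ∀ n, y n ∈ closedBall (0:ℂ) 1 := by
    intro n
    rw [hy, mem_closedBall_zero_iff]
    simp only
    rw [norm_smul, Real.norm_eq_abs, hζ₀n, mul_one]
    rw [_root_.abs_of_pos (by linarith [huhalf n, hupos n])]
    linarith [hupos n]
  have hytend : Filter.Tendsto y atTop (𝓝[closedBall (0:ℂ) 1] ζ₀) := by
    apply tendsto_nhdsWithin_of_tendsto_nhds_of_eventually_within
    · have h1 : Filter.Tendsto (fun n => 1 - u n) atTop (𝓝 1) := by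
        have := (tendsto_const_nhds (x := (1:ℝ))).sub hutend
        simpa using this
      have := h1.smul_const ζ₀
      rw [hy]
      simpa using this
    · exact Filter.Eventually.of_forall hymem
  have hydiff : ∀ n, y n - ζ₀ = -(u n) • ζ₀ := by
    intro n
    rw [hy]
    simp only
    rw [sub_smul, one_smul, neg_smul]
    abel
  -- littleO composition
  have hlittle := hhd.isLittleO.comp_tendsto hytend
  have hyznorm : ∀ n, ‖y n - ζ₀‖ = u n := by
    intro n
    rw [hydiff n, norm_smul, Real.norm_eq_abs, hζ₀n, mul_one, abs_neg,
      _root_.abs_of_pos (hupos n)]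
  have hbigO : (fun n => y n - ζ₀) =O[atTop] u := by
    apply Asymptotics.isBigO_of_le
    intro n
    rw [hyznorm n, Real.norm_eq_abs, _root_.abs_of_pos (hupos n)]
  have hlittle2 := hlittle.trans_isBigO hbigO
  have hlittle3 : (fun n => ρ (g (y n)) + u n * L ζ₀) =o[atTop] u := by
    apply hlittle2.congr' ?_ (Filter.EventuallyEq.refl _ _)
    apply Filter.Eventually.of_forall
    intro n
    have hz : ρ (g ζ₀) = 0 := hzero ζ₀ hζ₀
    simp only [Function.comp_apply]
    rw [hz, hydiff n, map_smul]
    simp only [sub_zero, neg_smul, smul_eq_mul]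
    ring
  have htd := hlittle3.tendsto_div_nhds_zero
  have htd2 : Filter.Tendsto (fun n => ρ (g (y n)) / u n + L ζ₀) atTop (𝓝 0) := by
    apply htd.congr
    intro n
    have hne := ne_of_gt (hupos n)
    field_simp
  have htd3 : Filter.Tendsto (fun n => ρ (g (y n)) / u n) atTop (𝓝 (-(L ζ₀))) := by
    have := htd2.sub (tendsto_const_nhds (x := L ζ₀))
    simp only [add_sub_cancel_right] at this
    simpa using this
  have hle : ∀ n, ρ (g (y n)) / u n ≤ -(2*ε) := by
    intro n
    have h1 := hrad (u n) ⟨hupos n, huhalf n⟩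
    rw [div_le_iff₀ (hupos n)]
    calc ρ (g ((1 - u n) • ζ₀)) ≤ -(2*ε*(u n)) := h1
      _ = -(2*ε) * u n := by ring
  have hfin : -(L ζ₀) ≤ -(2*ε) := le_of_tendsto htd3 (Filter.Eventually.of_forall hle)
  have : 2*ε ≤ L ζ₀ := by linarith
  have hLζ : L ζ₀ = fderiv ℝ ρ (g ζ₀) (T ζ₀) := rfl
  rw [hLζ] at this
  linarith

set_option maxHeartbeats 2000000 in
/-- **Transversality to the characteristic direction.** If `g : Δ → Ω` is an injective
holomorphic disk, `C¹` up to `Δ̄`, in a strictly pseudoconvex domain `Ω ⊂ ℂ²`, with boundary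
`γ = g(∂Δ)` in a totally real 2-dimensional submanifold `M ⊆ ∂Ω`, then at every `p ∈ γ`
the tangent `T_pγ` is transverse to the characteristic direction `⟨ξ_p⟩` (they meet only in `0`). -/
theorem tangent_transverse_to_characteristic (Ω : Set (ℂ × ℂ)) (ρ : ℂ × ℂ → ℝ)
    (hΩ : IsStrictPseudoconvexWith Ω ρ) (M : Set (ℂ × ℂ))
    (hM : IsSubmanifold2 M) (hMtr : TotallyReal M) (hMΩ : M ⊆ frontier Ω)
    (g : ℂ → ℂ × ℂ) (hghol : DifferentiableOn ℂ g (ball (0 : ℂ) 1))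
    (hgC1 : ContDiffOn ℝ 1 g (closedBall (0 : ℂ) 1)) (hginj : Set.InjOn g (ball (0 : ℂ) 1))
    (hgin : g '' ball (0 : ℂ) 1 ⊆ Ω) (hγ : g '' sphere (0 : ℂ) 1 ⊆ M) :
    ∀ p ∈ g '' sphere (0 : ℂ) 1,
      ∀ v ∈ tangentConeAt ℝ (g '' sphere (0 : ℂ) 1) p, v ∈ charDirSet M Ω p → v = 0 := by
  obtain ⟨hΩopen, -, -, U, hU, hclU, hρs, hΩeq⟩ := hΩ
  intro p hp v hv hvchar
  obtain ⟨⟨hvfront, w, hwcone, hvw⟩, hvM⟩ := hvchar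
  have hfrontU : frontier Ω ⊆ U := subset_trans frontier_subset_closure hclU
  have hρfront : ∀ z ∈ frontier Ω, ρ z = 0 := by
    intro z hz
    have hzU : z ∈ U := hfrontU hz
    have hle : ρ z ≤ 0 := by
      have hc : ContinuousAt ρ z := (hρs.1.contDiffAt (hU.mem_nhds hzU)).continuousAt
      have hcl : z ∈ closure Ω := frontier_subset_closure hz
      have hev : ∀ᶠ x in 𝓝[Ω] z, ρ x ≤ 0 := by
        apply eventually_nhdsWithin_of_forall
        intro x hx
        rw [hΩeq] at hx
        exact le_of_lt hx.2
      have hne : (𝓝[Ω] z).NeBot := mem_closure_iff_nhdsWithin_neBot.1 hcl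
      exact le_of_tendsto (hc.continuousWithinAt (s := Ω)).tendsto hev
    have hge : 0 ≤ ρ z := by
      have hnotΩ : z ∉ Ω := by
        intro h
        exact (hΩopen.frontier_eq ▸ hz).2 h
      by_contra hlt
      push_neg at hlt
      apply hnotΩ
      rw [hΩeq]
      exact ⟨hzU, hlt⟩
    linarith
  have hgcb : ∀ ζ ∈ closedBall (0:ℂ) 1, g ζ ∈ closure Ω := by
    intro ζ hζ
    have hc : closure (ball (0:ℂ) 1) = closedBall (0:ℂ) 1 := closure_ball (0:ℂ) one_ne_zero
    have h1 : g '' closedBall (0:ℂ) 1 ⊆ closure (g '' ball (0:ℂ) 1) := by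
      rw [← hc]
      exact (hgC1.continuousOn.mono (by rw [hc])).image_closure
    exact closure_mono hgin (h1 (mem_image_of_mem g hζ))
  have hgU2 : ∀ ζ ∈ closedBall (0:ℂ) 1, g ζ ∈ U := fun ζ h => hclU (hgcb ζ h)
  have hneg : ∀ ζ ∈ ball (0:ℂ) 1, ρ (g ζ) < 0 := by
    intro ζ h
    have h2 := hgin (mem_image_of_mem g h)
    rw [hΩeq] at h2
    exact h2.2
  have hzero : ∀ ζ ∈ sphere (0:ℂ) 1, ρ (g ζ) = 0 :=
    fun ζ h => hρfront _ (hMΩ (hγ (mem_image_of_mem g h)))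
  have hpfront : p ∈ frontier Ω := hMΩ (hγ hp)
  have hpU : p ∈ U := hfrontU hpfront
  set A : (ℂ × ℂ) →L[ℝ] ℝ := fderiv ℝ ρ p with hA
  have hρdp : HasFDerivAt ρ A p := hasFDerivAt_of_contDiffOn hU hρs.1 hpU
  have hAv : A (iSmul v) = 0 := by
    have hAw : A w = 0 := fderiv_eq_zero_on_cone hρdp hρfront (hρfront p hpfront) hwcone
    have hiv : iSmul v = -w := by rw [hvw, iSmul_iSmul]
    rw [hiv, map_neg, hAw, neg_zero]
  obtain ⟨c, d, hcnorm, hdmem, hcd⟩ := mem_tangentConeAt_iff_exists_seq_norm_tendsto_atTop.1 hv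
  -- choose preimages on the circle
  have hζex : ∀ n : ℕ, ∃ z : ℂ, z ∈ sphere (0:ℂ) 1 ∧
      (p + d n ∈ g '' sphere (0:ℂ) 1 → g z = p + d n) := by
    intro n
    by_cases h : p + d n ∈ g '' sphere (0:ℂ) 1
    · obtain ⟨z, hz, hgz⟩ := h
      exact ⟨z, hz, fun _ => hgz⟩
    · exact ⟨1, by simp [mem_sphere_zero_iff_norm], fun hh => absurd hh h⟩
  choose ζ hζs hζg using hζex
  have hgζ : ∀ᶠ n in atTop, g (ζ n) = p + d n := hdmem.mono (fun n h => hζg n h)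
  have hd0 : Tendsto d atTop (𝓝 0) := tangentConeAt.lim_zero atTop hcnorm hcd
  obtain ⟨ζlim, hζlims, φ, hφ, hφtend⟩ := (isCompact_sphere (0:ℂ) 1).tendsto_subseq hζs
  have hζscb : ζlim ∈ closedBall (0:ℂ) 1 := sphere_subset_closedBall hζlims
  have hφat : Tendsto φ atTop atTop := hφ.tendsto_atTop
  have hgφ : ∀ᶠ n in atTop, g (ζ (φ n)) = p + d (φ n) := hφat.eventually hgζ
  have hζφcb : Tendsto (fun n => ζ (φ n)) atTop (𝓝[closedBall (0:ℂ) 1] ζlim) :=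
    tendsto_nhdsWithin_of_tendsto_nhds_of_eventually_within _ hφtend
      (Eventually.of_forall (fun n => sphere_subset_closedBall (hζs _)))
  have hdφ0 : Tendsto (fun n => d (φ n)) atTop (𝓝 0) := hd0.comp hφat
  have hgp : g ζlim = p := by
    have hgcont : Tendsto (fun n => g (ζ (φ n))) atTop (𝓝 (g ζlim)) :=
      ((hgC1.continuousOn ζlim hζscb).tendsto.comp hζφcb)
    have h2 : Tendsto (fun n => p + d (φ n)) atTop (𝓝 p) := by
      simpa using (tendsto_const_nhds (x := p)).add hdφ0
    have h3 : Tendsto (fun n => g (ζ (φ n))) atTop (𝓝 p) :=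
      h2.congr' (hgφ.mono fun n h => h.symm)
    exact tendsto_nhds_unique hgcont h3
  -- Hopf at ζlim
  set T : ℂ →L[ℝ] (ℂ × ℂ) := fderivWithin ℝ g (closedBall (0:ℂ) 1) ζlim with hT
  have hhopf : 0 < fderiv ℝ ρ (g ζlim) (T ζlim) :=
    hopf hU hρs hghol hgC1 hgU2 hneg hzero hζlims
  rw [hgp] at hhopf
  have hhopfA : 0 < A (T ζlim) := hhopf
  -- complex linearity of T
  have hTlin : ∀ x : ℂ, T (Complex.I * x) = Complex.I • T x :=
    fun x => fderivWithin_boundary_clinear hghol hgC1 hζscb x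
  have hTu : ∀ u : ℂ, T u = u • T 1 := clinear_formula hTlin
  have hgpne : T 1 ≠ (0 : ℂ × ℂ) := by
    intro h
    rw [hTu ζlim, h, smul_zero] at hhopfA
    simp at hhopfA
  have hgpnorm : 0 < ‖T 1‖ := norm_pos_iff.2 hgpne
  have hgdiff : HasFDerivWithinAt g T (closedBall (0:ℂ) 1) ζlim :=
    ((hgC1.differentiableOn one_ne_zero) ζlim hζscb).hasFDerivWithinAt
  have hlittle := hgdiff.isLittleO
  have hTnorm : ∀ u : ℂ, ‖T u‖ = ‖u‖ * ‖T 1‖ := by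
    intro u; rw [hTu u, norm_smul]
  have hev : ∀ᶠ x in 𝓝[closedBall (0:ℂ) 1] ζlim,
      ‖g x - g ζlim - T (x - ζlim)‖ ≤ (‖T 1‖/2) * ‖x - ζlim‖ :=
    hlittle.def (by positivity)
  have hseq := hζφcb.eventually hev
  have hlow : ∀ᶠ n in atTop, (‖T 1‖/2) * ‖ζ (φ n) - ζlim‖ ≤ ‖d (φ n)‖ := by
    filter_upwards [hseq, hgφ] with n h1 h2
    have h3 : g (ζ (φ n)) - g ζlim = d (φ n) := by rw [h2, hgp]; abel
    have h4 : ‖T (ζ (φ n) - ζlim)‖ ≤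
        ‖g (ζ (φ n)) - g ζlim‖ + ‖g (ζ (φ n)) - g ζlim - T (ζ (φ n) - ζlim)‖ := by
      have heq : T (ζ (φ n) - ζlim) =
          (g (ζ (φ n)) - g ζlim) - (g (ζ (φ n)) - g ζlim - T (ζ (φ n) - ζlim)) := by abel
      conv_lhs => rw [heq]
      exact norm_sub_le _ _
    rw [hTnorm, h3] at h4
    rw [h3] at h1
    have h5 : ‖ζ (φ n) - ζlim‖ * ‖T 1‖ - (‖T 1‖/2) * ‖ζ (φ n) - ζlim‖ ≤ ‖d (φ n)‖ := by
      linarith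
    calc (‖T 1‖/2) * ‖ζ (φ n) - ζlim‖
        = ‖ζ (φ n) - ζlim‖ * ‖T 1‖ - (‖T 1‖/2) * ‖ζ (φ n) - ζlim‖ := by ring
      _ ≤ ‖d (φ n)‖ := h5
  set sq : ℕ → ℂ := fun n => c (φ n) • (ζ (φ n) - ζlim) with hsqdef
  have hcdφ : Tendsto (fun n => c (φ n) • d (φ n)) atTop (𝓝 v) := hcd.comp hφat
  have hcdnorm : Tendsto (fun n => ‖c (φ n) • d (φ n)‖) atTop (𝓝 ‖v‖) := hcdφ.norm
  set R : ℝ := (2/‖T 1‖) * (‖v‖ + 1) with hR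
  have hbdd : ∀ᶠ n in atTop, ‖sq n‖ ≤ R := by
    filter_upwards [hlow, hcdnorm.eventually (eventually_le_nhds (lt_add_one ‖v‖))] with n h1 h2
    have h3 : ‖sq n‖ = |c (φ n)| * ‖ζ (φ n) - ζlim‖ := by
      rw [hsqdef]; simp only [norm_smul, Real.norm_eq_abs]
    have h4 : |c (φ n)| * ((‖T 1‖/2) * ‖ζ (φ n) - ζlim‖) ≤ |c (φ n)| * ‖d (φ n)‖ :=
      mul_le_mul_of_nonneg_left h1 (abs_nonneg _)
    have h5 : |c (φ n)| * ‖d (φ n)‖ = ‖c (φ n) • d (φ n)‖ := by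
      rw [norm_smul, Real.norm_eq_abs]
    rw [h5] at h4
    have h6 : (‖T 1‖/2) * ‖sq n‖ ≤ ‖v‖ + 1 := by
      rw [h3]
      calc (‖T 1‖/2) * (|c (φ n)| * ‖ζ (φ n) - ζlim‖)
          = |c (φ n)| * ((‖T 1‖/2) * ‖ζ (φ n) - ζlim‖) := by ring
        _ ≤ ‖c (φ n) • d (φ n)‖ := h4
        _ ≤ ‖v‖ + 1 := h2
    rw [hR]
    rw [div_mul_eq_mul_div, le_div_iff₀ hgpnorm]
    nlinarith [h6, norm_nonneg (sq n)]
  obtain ⟨N, hN⟩ := eventually_atTop.1 hbdd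
  have hqmem : ∀ n : ℕ, sq (n + N) ∈ closedBall (0:ℂ) R := by
    intro n
    rw [mem_closedBall_zero_iff]
    exact hN (n + N) (Nat.le_add_left N n)
  obtain ⟨L, hL, ψ, hψ, hqtend⟩ :=
    tendsto_subseq_of_bounded (isBounded_closedBall (x := (0:ℂ)) (r := R)) hqmem
  set k : ℕ → ℕ := fun n => φ (ψ n + N) with hkdef
  have hψat : Tendsto (fun n => ψ n + N) atTop atTop :=
    (tendsto_add_atTop_nat N).comp hψ.tendsto_atTop
  have hkat : Tendsto k atTop atTop := hφat.comp hψat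
  have hζk_within : Tendsto (fun n => ζ (k n)) atTop (𝓝[closedBall (0:ℂ) 1] ζlim) :=
    hζφcb.comp hψat
  have hsqk : Tendsto (fun n => c (k n) • (ζ (k n) - ζlim)) atTop (𝓝 L) := hqtend
  have hgk : ∀ᶠ n in atTop, g (ζ (k n)) = p + d (k n) := hkat.eventually hgζ
  -- v = T L
  have hTL : Tendsto (fun n => T (c (k n) • (ζ (k n) - ζlim))) atTop (𝓝 (T L)) :=
    (T.continuous.tendsto L).comp hsqk
  have herr : Tendsto (fun n => c (k n) • (g (ζ (k n)) - g ζlim - T (ζ (k n) - ζlim)))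
      atTop (𝓝 0) := by
    rw [NormedAddCommGroup.tendsto_nhds_zero]
    intro ε hε
    have hnormL : Tendsto (fun n => ‖c (k n) • (ζ (k n) - ζlim)‖) atTop (𝓝 ‖L‖) := hsqk.norm
    have hbnd : ∀ᶠ n in atTop, ‖c (k n) • (ζ (k n) - ζlim)‖ ≤ ‖L‖ + 1 :=
      hnormL.eventually (eventually_le_nhds (lt_add_one _))
    have hc2 : (0:ℝ) < ε / (‖L‖ + 2) := by positivity
    have hev2 := hlittle.def hc2
    filter_upwards [hζk_within.eventually hev2, hbnd] with n h1 h2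
    have h3 : ‖c (k n) • (g (ζ (k n)) - g ζlim - T (ζ (k n) - ζlim))‖
        = |c (k n)| * ‖g (ζ (k n)) - g ζlim - T (ζ (k n) - ζlim)‖ := by
      rw [norm_smul, Real.norm_eq_abs]
    rw [h3]
    have h4 : |c (k n)| * ‖g (ζ (k n)) - g ζlim - T (ζ (k n) - ζlim)‖
        ≤ |c (k n)| * ((ε / (‖L‖ + 2)) * ‖ζ (k n) - ζlim‖) :=
      mul_le_mul_of_nonneg_left h1 (abs_nonneg _)
    have h5 : |c (k n)| * ((ε / (‖L‖ + 2)) * ‖ζ (k n) - ζlim‖)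
        = (ε / (‖L‖ + 2)) * ‖c (k n) • (ζ (k n) - ζlim)‖ := by
      rw [norm_smul, Real.norm_eq_abs]; ring
    rw [h5] at h4
    have h6 : (ε / (‖L‖ + 2)) * ‖c (k n) • (ζ (k n) - ζlim)‖ ≤ (ε / (‖L‖ + 2)) * (‖L‖ + 1) :=
      mul_le_mul_of_nonneg_left h2 (le_of_lt hc2)
    have h7 : (ε / (‖L‖ + 2)) * (‖L‖ + 1) < ε := by
      have hL2 : (0:ℝ) < ‖L‖ + 2 := by positivity
      rw [div_mul_eq_mul_div, div_lt_iff₀ hL2]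
      nlinarith [norm_nonneg L, hε]
    linarith
  have hsum : Tendsto (fun n => T (c (k n) • (ζ (k n) - ζlim)) +
      c (k n) • (g (ζ (k n)) - g ζlim - T (ζ (k n) - ζlim))) atTop (𝓝 (T L + 0)) :=
    hTL.add herr
  have heq2 : (fun n => T (c (k n) • (ζ (k n) - ζlim)) +
      c (k n) • (g (ζ (k n)) - g ζlim - T (ζ (k n) - ζlim))) =ᶠ[atTop]
      (fun n => c (k n) • d (k n)) := by
    filter_upwards [hgk] with n h1
    have h2 : g (ζ (k n)) - g ζlim = d (k n) := by rw [h1, hgp]; abel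
    rw [map_smul, h2, smul_sub]
    abel
  have hlim2 : Tendsto (fun n => c (k n) • d (k n)) atTop (𝓝 (T L)) := by
    have := Tendsto.congr' heq2 hsum
    simpa using this
  have hvk : Tendsto (fun n => c (k n) • d (k n)) atTop (𝓝 v) := hcd.comp hkat
  have hvT : v = T L := tendsto_nhds_unique hvk hlim2
  -- L is tangent to the sphere
  have hLcone : L ∈ tangentConeAt ℝ (sphere (0:ℂ) 1) ζlim := by
    refine mem_tangentConeAt_iff_exists_seq_norm_tendsto_atTop.2
      ⟨fun n => c (k n), fun n => ζ (k n) - ζlim, ?_, ?_, ?_⟩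
    · exact hcnorm.comp hkat
    · apply Eventually.of_forall
      intro n
      have := hζs (k n)
      simpa using this
    · exact hsqk
  obtain ⟨t, hst⟩ := cone_sphere hζlims hLcone
  -- conclude
  have hvt : v = t • (Complex.I • T ζlim) := by
    rw [hvT, hst, map_smul, hTlin ζlim]
  have hisv : iSmul v = t • (-(T ζlim)) := by
    rw [hvt, iSmul_real_smul]
    congr 1
    rw [← iSmul_eq_smul (T ζlim), iSmul_iSmul]
  have hAv2 : A (iSmul v) = t * (-(A (T ζlim))) := by
    rw [hisv, map_smul, map_neg]
    simp [smul_eq_mul]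
  rw [hAv] at hAv2
  have ht0 : t = 0 := by
    rcases mul_eq_zero.1 hAv2.symm with h | h
    · exact h
    · exfalso
      have : A (T ζlim) = 0 := by linarith [neg_eq_zero.1 h]
      linarith
  rw [hvt, ht0, zero_smul]
end
end

section
/- Let F : S¹ × ℂ → ℝ be a smooth defining function of a smooth family of graphical tori, with ∂F/∂w (λ,w) ≠ 0 for w ≠ 0. Let γ : S¹ → ℂ∖{0} be a continuous curve whose winding number around 0 is equal to zero. Then the winding number around 0 of the curve λ ↦ ∂F/∂w (λ, γ(λ)), λ ∈ S¹, is also equal to zero. -/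
open Set Metric Complex

noncomputable section

/-- The closed curve `c` (periodic of period `2π`) has winding number `1` around `0`:
there is a continuous lift of the argument increasing by `2π` over one period. -/
def WindingOne (c : ℝ → ℂ) : Prop :=
  ∃ θ : ℝ → ℝ, Continuous θ ∧
    (∀ t, c t = (‖c t‖ : ℂ) * Complex.exp ((θ t : ℂ) * Complex.I)) ∧
    θ (2 * Real.pi) = θ 0 + 2 * Real.pi

/-- `c : ℝ → ℂ` is a smooth simple closed curve (parametrized with period `2π`). -/
def IsSCC (c : ℝ → ℂ) : Prop :=
  ContDiff ℝ (⊤ : ℕ∞) c ∧ (∀ t, c (t + 2 * Real.pi) = c t) ∧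
    Set.InjOn c (Ico 0 (2 * Real.pi)) ∧ ∀ t, deriv c t ≠ 0

/-- `Γ ⊆ S¹ × ℂ` is a graphical torus: every vertical slice `C_λ` is a smooth simple
closed curve in `ℂ ∖ {0}` with winding number `1` around `0`. -/
def IsGraphicalTorus (Γ : Set (ℂ × ℂ)) : Prop :=
  (∀ p ∈ Γ, p.1 ∈ sphere (0 : ℂ) 1) ∧
  ∀ l ∈ sphere (0 : ℂ) 1, ∃ c : ℝ → ℂ,
    IsSCC c ∧ (∀ t, c t ≠ 0) ∧ WindingOne c ∧ Set.range c = {w : ℂ | (l, w) ∈ Γ}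

/-- `g` is continuous on the closed unit disk and holomorphic on the open unit disk,
hence defines a holomorphic disk `{(λ, g λ) : λ ∈ Δ}`. -/
def HolDisk (g : ℂ → ℂ) : Prop :=
  ContinuousOn g (closedBall (0 : ℂ) 1) ∧ DifferentiableOn ℂ g (ball (0 : ℂ) 1)

/-- The trace `{(λ, g λ) : λ ∈ S¹}` of the disk defined by `g` lies in `Γ`. -/
def DiskTraceIn (g : ℂ → ℂ) (Γ : Set (ℂ × ℂ)) : Prop :=
  ∀ l ∈ sphere (0 : ℂ) 1, (l, g l) ∈ Γ

/-- The Wirtinger derivative `∂f/∂w = ½(∂f/∂x − i ∂f/∂y)` of `f : ℂ → ℝ`, as a complex number. -/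
def wirt (f : ℂ → ℝ) (w : ℂ) : ℂ :=
  (((fderiv ℝ f w 1 : ℝ) : ℂ) - Complex.I * ((fderiv ℝ f w Complex.I : ℝ) : ℂ)) / 2

/-- The torus `Γ^t = {(λ, w) : λ ∈ S¹, F(λ,w) = t}` cut out by the defining function `F`. -/
def TorusOf (F : ℂ → ℂ → ℝ) (t : ℝ) : Set (ℂ × ℂ) :=
  {p : ℂ × ℂ | p.1 ∈ sphere (0 : ℂ) 1 ∧ F p.1 p.2 = t}

/-- `F : S¹ × ℂ → ℝ` is a smooth defining function of a smooth family of graphical tori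
`Γ^t = F⁻¹(t)`, `t > 0`: each slice level set is a smooth simple closed curve of winding
number `1` around `0`, the level sets foliate `ℂ ∖ {0}` for each fixed `λ ∈ S¹`,
`F(λ,w) = |w|²` near `w = 0`, and `∂F/∂w ≠ 0` for `w ≠ 0`. -/
def IsSmoothTorusFamily (F : ℂ → ℂ → ℝ) : Prop :=
  ContDiffOn ℝ (⊤ : ℕ∞) (fun p : ℂ × ℂ => F p.1 p.2) (sphere (0 : ℂ) 1 ×ˢ univ) ∧
  (∀ l ∈ sphere (0 : ℂ) 1, ContDiff ℝ (⊤ : ℕ∞) (F l)) ∧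
  (∃ ε : ℝ, 0 < ε ∧ ∀ l ∈ sphere (0 : ℂ) 1, ∀ w : ℂ,
      Complex.normSq w < ε → F l w = Complex.normSq w) ∧
  (∀ l ∈ sphere (0 : ℂ) 1, ∀ w : ℂ, w ≠ 0 → 0 < F l w) ∧
  (∀ l ∈ sphere (0 : ℂ) 1, ∀ w : ℂ, w ≠ 0 → wirt (F l) w ≠ 0) ∧
  (∀ l ∈ sphere (0 : ℂ) 1, ∀ t : ℝ, 0 < t → ∃ c : ℝ → ℂ,
      IsSCC c ∧ (∀ s, c s ≠ 0) ∧ WindingOne c ∧ Set.range c = {w : ℂ | F l w = t})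

/-- The closed curve `c` has winding number `0` around `0`. -/
def WindingZero (c : ℝ → ℂ) : Prop :=
  ∃ θ : ℝ → ℝ, Continuous θ ∧
    (∀ t, c t = (‖c t‖ : ℂ) * Complex.exp ((θ t : ℂ) * Complex.I)) ∧
    θ (2 * Real.pi) = θ 0

/-- A continuous real function taking values in `(2π)ℤ` is constant. -/
lemma aux_ivt_false {f : ℝ → ℝ} (hf : Continuous f)
    (h : ∀ t, ∃ n : ℤ, f t = n * (2 * Real.pi)) {a b : ℝ} (hab : a ≤ b)
    (hlt : f a < f b) : False := by
  obtain ⟨na, hna⟩ := h a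
  obtain ⟨nb, hnb⟩ := h b
  have hpi := Real.pi_pos
  have hnab : (na : ℝ) < nb := by nlinarith
  have hnab' : (na : ℝ) + 1 ≤ nb := by exact_mod_cast (by exact_mod_cast hnab : na < nb)
  have hc : f a + Real.pi ∈ Set.Icc (f a) (f b) := by
    constructor
    · linarith
    · nlinarith
  obtain ⟨t, -, ht⟩ := intermediate_value_Icc hab hf.continuousOn hc
  obtain ⟨nt, hnt⟩ := h t
  rw [hnt, hna] at ht
  have h2 : ((2 * nt : ℤ) : ℝ) * Real.pi = ((2 * na + 1 : ℤ) : ℝ) * Real.pi := by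
    push_cast; linarith
  have := mul_right_cancel₀ (ne_of_gt hpi) h2
  have : (2 * nt : ℤ) = 2 * na + 1 := by exact_mod_cast this
  omega

lemma const_of_twoPiInt {f : ℝ → ℝ} (hf : Continuous f)
    (h : ∀ t, ∃ n : ℤ, f t = n * (2 * Real.pi)) (a b : ℝ) : f a = f b := by
  have key : ∀ x y : ℝ, x ≤ y → f x = f y := by
    intro x y hxy
    rcases lt_trichotomy (f x) (f y) with hlt | he | hgt
    · exact absurd (aux_ivt_false hf h hxy hlt) not_false
    · exact he
    · exfalso
      exact aux_ivt_false (f := fun t => -f t) (hf.neg)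
        (fun t => (h t).elim fun n hn => ⟨-n, by push_cast; linarith⟩) hxy (by simpa using hgt)
  rcases le_total a b with hab | hab
  · exact key a b hab
  · exact (key b a hab).symm

/-- Winding zero for a constant positive real curve. -/
lemma windingZero_const_pos {r : ℝ} (hr : 0 < r) : WindingZero (fun _ => (r : ℂ)) := by
  refine ⟨fun _ => 0, continuous_const, fun t => ?_, rfl⟩
  simp [Complex.norm_real, Real.norm_eq_abs, abs_of_pos hr]

/-- If `c` stays strictly closer to `d` than `‖d‖`, winding zero transfers from `d` to `c`. -/
lemma windingZero_of_close {c d : ℝ → ℂ} (hc : Continuous c) (hd : Continuous d)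
    (hdz : ∀ t, d t ≠ 0) (hcper : c (2 * Real.pi) = c 0) (hdper : d (2 * Real.pi) = d 0)
    (hclose : ∀ t, ‖c t - d t‖ < ‖d t‖) (hw : WindingZero d) : WindingZero c := by
  obtain ⟨θ, hθc, hθ, hθper⟩ := hw
  set h : ℝ → ℂ := fun t => c t / d t with hh
  have hhc : Continuous h := hc.div hd hdz
  have hre : ∀ t, 0 < (h t).re := by
    intro t
    have hd0 : (0:ℝ) < ‖d t‖ := norm_pos_iff.mpr (hdz t)
    have h1 : ‖h t - 1‖ < 1 := by
      have : h t - 1 = (c t - d t) / d t := by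
        rw [hh]; simp only; rw [sub_div, div_self (hdz t)]
      rw [this, norm_div, div_lt_one hd0]
      exact hclose t
    have h2 : |(h t - 1).re| ≤ ‖h t - 1‖ := Complex.abs_re_le_norm _
    have h3 : (h t - 1).re = (h t).re - 1 := by simp
    rw [h3] at h2
    rcases abs_le.mp h2 with ⟨h4, -⟩
    linarith
  have hslit : ∀ t, h t ∈ Complex.slitPlane := fun t =>
    Complex.mem_slitPlane_iff.mpr (Or.inl (hre t))
  have hargc : Continuous fun t => (h t).arg := by
    rw [continuous_iff_continuousAt]
    exact fun t => (Complex.continuousAt_arg (hslit t)).comp hhc.continuousAt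
  refine ⟨fun t => θ t + (h t).arg, hθc.add hargc, fun t => ?_, ?_⟩
  · have hceq : c t = d t * h t := by
      show c t = d t * (c t / d t)
      rw [← mul_div_assoc]
      exact (mul_div_cancel_left₀ (c t) (hdz t)).symm
    rw [hceq]
    calc d t * h t
        = ((‖d t‖ : ℂ) * Complex.exp ((θ t : ℂ) * Complex.I)) *
          (((‖h t‖ : ℝ) : ℂ) * Complex.exp (((h t).arg : ℂ) * Complex.I)) := by
          rw [← hθ t, Complex.norm_mul_exp_arg_mul_I]
      _ = (‖d t * h t‖ : ℂ) * Complex.exp (((θ t + (h t).arg : ℝ) : ℂ) * Complex.I) := by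
          rw [norm_mul]
          push_cast
          rw [add_mul, Complex.exp_add]
          ring
  · have : h (2 * Real.pi) = h 0 := by simp [hh, hcper, hdper]
    show θ (2 * Real.pi) + (h (2 * Real.pi)).arg = θ 0 + (h 0).arg
    rw [hθper, this]

set_option maxHeartbeats 1000000 in
/-- **Winding number lemma.** If `F` is a smooth defining function of a family of graphical
tori and `γ : S¹ → ℂ ∖ {0}` (parametrized by `λ = e^{it}`) has winding number `0` around `0`,
then the curve `λ ↦ ∂F/∂w(λ, γ(λ))` also has winding number `0` around `0`. -/
theorem winding_number_of_Fw (F : ℂ → ℂ → ℝ) (hF : IsSmoothTorusFamily F)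
    (γ : ℝ → ℂ) (hγc : Continuous γ) (hγper : ∀ t, γ (t + 2 * Real.pi) = γ t)
    (hγnz : ∀ t, γ t ≠ 0) (hγ0 : WindingZero γ) :
    WindingZero (fun t => wirt (F (Complex.exp ((t : ℂ) * Complex.I))) (γ t)) := by
  obtain ⟨hFsm, hFl, ⟨ε, hε, hεeq⟩, hFpos, hwirt, -⟩ := hF
  obtain ⟨θ, hθc, hθeq, hθp⟩ := hγ0
  have hπ := Real.pi_pos
  have hsph : ∀ t : ℝ, Complex.exp ((t : ℂ) * Complex.I) ∈ sphere (0 : ℂ) 1 := by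
    intro t
    simp [mem_sphere_zero_iff_norm, Complex.norm_exp_ofReal_mul_I]
  have hγpos : ∀ t, (0 : ℝ) < ‖γ t‖ := fun t => norm_pos_iff.mpr (hγnz t)
  -- θ is periodic
  have hθper : ∀ t, θ (t + 2 * Real.pi) = θ t := by
    have hint : ∀ t, ∃ n : ℤ, θ (t + 2 * Real.pi) - θ t = n * (2 * Real.pi) := by
      intro t
      have h1 : Complex.exp ((θ (t + 2 * Real.pi) : ℂ) * Complex.I)
          = Complex.exp ((θ t : ℂ) * Complex.I) := by
        have e1 := hθeq (t + 2 * Real.pi)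
        rw [hγper t] at e1
        have hne : ((‖γ t‖ : ℝ) : ℂ) ≠ 0 := by exact_mod_cast (hγpos t).ne'
        exact mul_left_cancel₀ hne (e1.symm.trans (hθeq t))
      obtain ⟨n, hn⟩ := Complex.exp_eq_exp_iff_exists_int.mp h1
      refine ⟨n, ?_⟩
      have him := congrArg Complex.im hn
      simp [Complex.add_im, Complex.mul_im, Complex.ofReal_re, Complex.ofReal_im,
        Complex.I_re, Complex.I_im] at him
      linarith [him]
    intro t
    have hcont : Continuous fun t => θ (t + 2 * Real.pi) - θ t :=
      (hθc.comp (continuous_id.add continuous_const)).sub hθc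
    have hconst := const_of_twoPiInt hcont hint t 0
    simp only [zero_add, hθp] at hconst
    linarith [hconst]
  -- smoothness of the composed map
  have hH : ContDiff ℝ (⊤ : ℕ∞) (fun p : ℝ × ℂ => F (Complex.exp ((p.1 : ℂ) * Complex.I)) p.2) := by
    rw [← contDiffOn_univ]
    have he : ContDiff ℝ (⊤ : ℕ∞) fun p : ℝ × ℂ => (Complex.exp ((p.1 : ℂ) * Complex.I), p.2) := by
      refine ContDiff.prodMk ?_ contDiff_snd
      exact (Complex.contDiff_exp (𝕜 := ℝ)).comp
        ((Complex.ofRealCLM.contDiff.comp contDiff_fst).mul contDiff_const)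
    exact ContDiffOn.comp hFsm he.contDiffOn
      (fun p _ => Set.mk_mem_prod (hsph p.1) (Set.mem_univ _))
  -- continuity of the Wirtinger derivative in both variables
  have hGc : Continuous fun p : ℝ × ℂ => wirt (F (Complex.exp ((p.1 : ℂ) * Complex.I))) p.2 := by
    have hfd : Continuous fun p : ℝ × ℂ =>
        fderiv ℝ (F (Complex.exp ((p.1 : ℂ) * Complex.I))) p.2 := by
      have h := ContDiff.fderiv (𝕜 := ℝ)
        (f := fun (p : ℝ × ℂ) (w : ℂ) => F (Complex.exp ((p.1 : ℂ) * Complex.I)) w)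
        (g := fun p : ℝ × ℂ => p.2) (m := (⊤ : ℕ∞)) (n := 0)
        (hH.comp ((contDiff_fst.fst).prodMk contDiff_snd)) contDiff_snd (by exact_mod_cast le_top)
      exact h.continuous
    have h1 : Continuous fun p : ℝ × ℂ =>
        ((fderiv ℝ (F (Complex.exp ((p.1 : ℂ) * Complex.I))) p.2 (1 : ℂ) : ℝ) : ℂ) :=
      Complex.continuous_ofReal.comp (hfd.clm_apply continuous_const)
    have h2 : Continuous fun p : ℝ × ℂ =>
        ((fderiv ℝ (F (Complex.exp ((p.1 : ℂ) * Complex.I))) p.2 Complex.I : ℝ) : ℂ) :=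
      Complex.continuous_ofReal.comp (hfd.clm_apply continuous_const)
    simp only [wirt]
    exact (h1.sub (continuous_const.mul h2)).div_const 2
  -- value of the Wirtinger derivative at a small real point
  set r₀ : ℝ := Real.sqrt (ε / 2) with hr₀def
  have hr₀ : 0 < r₀ := Real.sqrt_pos.mpr (by linarith)
  have hr₀sq : Complex.normSq ((r₀ : ℝ) : ℂ) < ε := by
    rw [Complex.normSq_ofReal, Real.mul_self_sqrt (by linarith)]
    linarith
  have hwr : ∀ l ∈ sphere (0 : ℂ) 1, wirt (F l) ((r₀ : ℝ) : ℂ) = ((r₀ : ℝ) : ℂ) := by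
    intro l hl
    have hopen : IsOpen {w : ℂ | Complex.normSq w < ε} :=
      isOpen_lt Complex.continuous_normSq continuous_const
    have hev : F l =ᶠ[nhds ((r₀ : ℝ) : ℂ)] Complex.normSq := by
      filter_upwards [hopen.mem_nhds hr₀sq] with w hw
      exact hεeq l hl w hw
    have hfe : fderiv ℝ (F l) ((r₀ : ℝ) : ℂ) = fderiv ℝ Complex.normSq ((r₀ : ℝ) : ℂ) :=
      hev.fderiv_eq
    have hfun : (Complex.normSq : ℂ → ℝ) = fun z : ℂ => z.re * z.re + z.im * z.im :=
      funext Complex.normSq_apply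
    have hre : HasFDerivAt (fun z : ℂ => Complex.reCLM z * Complex.reCLM z +
          Complex.imCLM z * Complex.imCLM z)
        ((Complex.reCLM ((r₀ : ℝ) : ℂ) • Complex.reCLM +
          Complex.reCLM ((r₀ : ℝ) : ℂ) • Complex.reCLM) +
         (Complex.imCLM ((r₀ : ℝ) : ℂ) • Complex.imCLM +
          Complex.imCLM ((r₀ : ℝ) : ℂ) • Complex.imCLM)) ((r₀ : ℝ) : ℂ) :=
      (Complex.reCLM.hasFDerivAt.mul Complex.reCLM.hasFDerivAt).add
        (Complex.imCLM.hasFDerivAt.mul Complex.imCLM.hasFDerivAt)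
    have hre' : HasFDerivAt (Complex.normSq : ℂ → ℝ)
        ((Complex.reCLM ((r₀ : ℝ) : ℂ) • Complex.reCLM +
          Complex.reCLM ((r₀ : ℝ) : ℂ) • Complex.reCLM) +
         (Complex.imCLM ((r₀ : ℝ) : ℂ) • Complex.imCLM +
          Complex.imCLM ((r₀ : ℝ) : ℂ) • Complex.imCLM)) ((r₀ : ℝ) : ℂ) := by
      refine HasFDerivAt.congr_of_eventuallyEq hre (Filter.Eventually.of_forall fun z => ?_)
      simp [Complex.normSq_apply]
    unfold wirt
    rw [hfe, hre'.fderiv]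
    simp [ContinuousLinearMap.add_apply, ContinuousLinearMap.smul_apply,
      Complex.reCLM_apply, Complex.imCLM_apply, Complex.one_re, Complex.one_im,
      Complex.I_re, Complex.I_im, Complex.ofReal_re, Complex.ofReal_im]
  -- the homotopy
  set δf : ℝ → ℝ → ℂ := fun s t =>
    ((((1 - s) * ‖γ t‖ + s * r₀ : ℝ)) : ℂ) *
      Complex.exp ((((1 - s) * θ t : ℝ) : ℂ) * Complex.I) with hδf
  set Ψ : ℝ → ℝ → ℂ :=
    fun s t => wirt (F (Complex.exp ((t : ℂ) * Complex.I))) (δf s t) with hΨ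
  have hδcont : Continuous fun q : ℝ × ℝ => δf q.1 q.2 := by
    apply Continuous.mul
    · exact Complex.continuous_ofReal.comp
        (((continuous_const.sub continuous_fst).mul ((hγc.comp continuous_snd).norm)).add
          (continuous_fst.mul continuous_const))
    · exact Complex.continuous_exp.comp
        ((Complex.continuous_ofReal.comp
          ((continuous_const.sub continuous_fst).mul (hθc.comp continuous_snd))).mul
          continuous_const)
  have hδ0 : ∀ t, δf 0 t = γ t := by
    intro t
    rw [hδf]
    simp only [sub_zero, one_mul, zero_mul, add_zero]
    exact (hθeq t).symm
  have hδ1 : ∀ t, δf 1 t = ((r₀ : ℝ) : ℂ) := by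
    intro t
    rw [hδf]
    norm_num
  have hδpos : ∀ s ∈ Set.Icc (0:ℝ) 1, ∀ t, (0:ℝ) < (1 - s) * ‖γ t‖ + s * r₀ := by
    intro s hs t
    rcases lt_or_eq_of_le hs.2 with h1 | h1
    · nlinarith [mul_pos (by linarith : (0:ℝ) < 1 - s) (hγpos t),
        mul_nonneg hs.1 hr₀.le]
    · rw [h1]
      nlinarith [hγpos t]
  have hδne : ∀ s ∈ Set.Icc (0:ℝ) 1, ∀ t, δf s t ≠ 0 := by
    intro s hs t
    rw [hδf]
    refine mul_ne_zero ?_ (Complex.exp_ne_zero _)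
    exact_mod_cast (hδpos s hs t).ne'
  have hδper : ∀ s t, δf s (t + 2 * Real.pi) = δf s t := by
    intro s t
    rw [hδf]
    simp only [hγper, hθper]
  have hexp_per : ∀ t : ℝ, Complex.exp (((t + 2 * Real.pi : ℝ) : ℂ) * Complex.I)
      = Complex.exp ((t : ℂ) * Complex.I) := by
    intro t
    push_cast
    rw [add_mul, Complex.exp_add, Complex.exp_two_pi_mul_I, mul_one]
  have hΨcont : Continuous fun q : ℝ × ℝ => Ψ q.1 q.2 := by
    have heq : (fun q : ℝ × ℝ => Ψ q.1 q.2) =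
        (fun p : ℝ × ℂ => wirt (F (Complex.exp ((p.1 : ℂ) * Complex.I))) p.2) ∘
          (fun q : ℝ × ℝ => (q.2, δf q.1 q.2)) := rfl
    rw [heq]
    exact hGc.comp (continuous_snd.prodMk hδcont)
  have hΨslice : ∀ s, Continuous fun t => Ψ s t := by
    intro s
    have heq : (fun t : ℝ => Ψ s t) =
        (fun q : ℝ × ℝ => Ψ q.1 q.2) ∘ (fun t : ℝ => (s, t)) := rfl
    rw [heq]
    exact hΨcont.comp (continuous_const.prodMk continuous_id)
  have hΨper : ∀ s, Function.Periodic (fun t => Ψ s t) (2 * Real.pi) := by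
    intro s t
    simp only [hΨ]
    rw [hexp_per, hδper]
  have hΨ1 : ∀ t, Ψ 1 t = ((r₀ : ℝ) : ℂ) := by
    intro t
    rw [hΨ]
    simp only
    rw [hδ1]
    exact hwr _ (hsph t)
  have hΨne : ∀ s ∈ Set.Icc (0:ℝ) 1, ∀ t, Ψ s t ≠ 0 := fun s hs t =>
    hwirt _ (hsph t) _ (hδne s hs t)
  -- minimum of ‖Ψ‖ on the compact set
  set K : Set (ℝ × ℝ) := (Set.Icc (0:ℝ) 1) ×ˢ (Set.Icc (0:ℝ) (2 * Real.pi)) with hKdef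
  have hK : IsCompact K := isCompact_Icc.prod isCompact_Icc
  have hKne : K.Nonempty := ⟨(0, 0), Set.mk_mem_prod ⟨le_refl 0, zero_le_one⟩
    ⟨le_refl 0, by positivity⟩⟩
  obtain ⟨p₀, hp₀K, hp₀min⟩ := hK.exists_isMinOn hKne
    ((hΨcont.norm).continuousOn)
  set m : ℝ := ‖Ψ p₀.1 p₀.2‖ with hmdef
  have hm : 0 < m := norm_pos_iff.mpr (hΨne p₀.1 (Set.mem_prod.mp hp₀K).1 p₀.2)
  -- uniform continuity
  obtain ⟨dlt, hdlt, hunif⟩ := Metric.uniformContinuousOn_iff.mp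
    (hK.uniformContinuousOn_of_continuous hΨcont.continuousOn) m hm
  obtain ⟨N₀, hN₀⟩ := exists_nat_one_div_lt hdlt
  set N : ℕ := N₀ + 1 with hNdef
  have hNr : (0:ℝ) < (N : ℝ) := by positivity
  have hNd : 1 / (N : ℝ) < dlt := by
    rw [hNdef]
    push_cast
    exact hN₀
  -- reduction to the fundamental domain
  have hfrac : ∀ t : ℝ, (t - (⌊t / (2 * Real.pi)⌋ : ℝ) * (2 * Real.pi)) ∈
      Set.Icc (0:ℝ) (2 * Real.pi) := by
    intro t
    have h2π : (0:ℝ) < 2 * Real.pi := by positivity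
    have heq : t - (⌊t / (2 * Real.pi)⌋ : ℝ) * (2 * Real.pi)
        = Int.fract (t / (2 * Real.pi)) * (2 * Real.pi) := by
      rw [Int.fract]
      field_simp
    rw [heq]
    constructor
    · exact mul_nonneg (Int.fract_nonneg _) h2π.le
    · nlinarith [Int.fract_lt_one (t / (2 * Real.pi)), Int.fract_nonneg (t / (2 * Real.pi))]
  -- the chaining argument
  have main : ∀ j : ℕ, WindingZero fun t => Ψ (((N - j : ℕ) : ℝ) / N) t := by
    intro j
    induction j with
    | zero =>
      have h1 : ((N - 0 : ℕ) : ℝ) / N = 1 := by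
        simp [div_self hNr.ne']
      rw [h1, funext hΨ1]
      exact windingZero_const_pos hr₀
    | succ j ih =>
      rcases le_or_gt N j with hle | hlt
      · have e1 : N - (j + 1) = N - j := by omega
        rw [e1]
        exact ih
      · -- j < N, so j + 1 ≤ N
        set a : ℝ := ((N - (j + 1) : ℕ) : ℝ) / N with hadef
        set b : ℝ := ((N - j : ℕ) : ℝ) / N with hbdef
        have hsub : (N - j : ℕ) = (N - (j + 1) : ℕ) + 1 := by omega
        have hba : b = a + 1 / N := by
          rw [hadef, hbdef, hsub]
          push_cast
          field_simp
        have haIcc : a ∈ Set.Icc (0:ℝ) 1 := by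
          constructor
          · positivity
          · rw [hadef, div_le_one hNr]
            exact_mod_cast Nat.sub_le N (j + 1)
        have hbIcc : b ∈ Set.Icc (0:ℝ) 1 := by
          constructor
          · positivity
          · rw [hbdef, div_le_one hNr]
            exact_mod_cast Nat.sub_le N j
        refine windingZero_of_close (hΨslice a) (hΨslice b) (hΨne b hbIcc) ?_ ?_ ?_ ih
        · have := hΨper a 0
          simpa using this
        · have := hΨper b 0
          simpa using this
        · intro t
          set t' : ℝ := t - (⌊t / (2 * Real.pi)⌋ : ℝ) * (2 * Real.pi) with ht'def
          have hpa : Ψ a t' = Ψ a t := by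
            have := (hΨper a).sub_int_mul_eq (x := t) ⌊t / (2 * Real.pi)⌋
            simpa [ht'def] using this
          have hpb : Ψ b t' = Ψ b t := by
            have := (hΨper b).sub_int_mul_eq (x := t) ⌊t / (2 * Real.pi)⌋
            simpa [ht'def] using this
          have ht'mem : t' ∈ Set.Icc (0:ℝ) (2 * Real.pi) := hfrac t
          have hmem_a : (a, t') ∈ K := Set.mk_mem_prod haIcc ht'mem
          have hmem_b : (b, t') ∈ K := Set.mk_mem_prod hbIcc ht'mem
          have hdista : dist (a, t') (b, t') < dlt := by
            rw [Prod.dist_eq]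
            simp only [dist_self]
            rw [Real.dist_eq, hba]
            have h1 : |a - (a + 1 / (N:ℝ))| = 1 / N := by
              rw [abs_sub_comm]
              simp [abs_of_pos (by positivity : (0:ℝ) < 1 / (N:ℝ))]
            rw [h1]
            simpa using lt_of_le_of_lt (le_max_left _ _) (max_lt hNd hdlt)
          have hlt2 := hunif (a, t') hmem_a (b, t') hmem_b hdista
          rw [← hpa, ← hpb]
          calc ‖Ψ a t' - Ψ b t'‖ = dist (Ψ a t') (Ψ b t') := (dist_eq_norm _ _).symm
            _ < m := hlt2
            _ ≤ ‖Ψ b t'‖ := isMinOn_iff.mp hp₀min (b, t') hmem_b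
  have hfin := main N
  have h0 : ((N - N : ℕ) : ℝ) / N = 0 := by simp
  rw [h0] at hfin
  have heq : (fun t => Ψ 0 t)
      = fun t : ℝ => wirt (F (Complex.exp ((t : ℂ) * Complex.I))) (γ t) := by
    funext t
    rw [hΨ]
    simp only
    rw [hδ0]
  rwa [heq] at hfin
end
end
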